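/- arXiv:1510.08592 — 8 statements merged into one kernel-verified Lean document; each statement's English description precedes it below -/
import Mathlib

section
/- Let K, m, d be positive integers and let a_1 < a_2 < ⋯ < a_d be integers with 1 ≤ a_1 and a_d < K. Consider the original index coding problem with K messages and antidotes A_k = {k + a_1, k + a_2, …, k + a_d} ⊆ ZMod K for each k ∈ ZMod K, and the lifted problem with mK messages and antidotes A'_k = {k + iK : 1 ≤ i ≤ m−1} ∪ {k + a_j + iK : 1 ≤ j ≤ d, 0 ≤ i ≤ m−1} ⊆ ZMod (mK) for each k ∈ ZMod (mK). If C is a valid scalar linear index code of length l for the original problem, then the lifted code C^(m) = {t^(m) : t ∈ C} is a valid scalar linear index code of length l for the lifted problem. -/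
/-- Standard basis vector `e_j` of `V_n = ZMod n → GF(2)`. -/
def stdVec (n : ℕ) (j : ZMod n) : ZMod n → ZMod 2 := fun i => if i = j then 1 else 0

/-- `C` is a valid scalar linear index code over `GF(2)` for the index coding problem
with `n` messages and antidote pattern `A`: it is a finite set of vectors such that
every standard basis vector `e_k` lies in the span of `C` together with the basis
vectors indexed by the antidote set `A k`. -/
def IsIndexCode (n : ℕ) (A : ZMod n → Set (ZMod n)) (C : Set (ZMod n → ZMod 2)) : Prop :=
  C.Finite ∧ ∀ k : ZMod n,
    stdVec n k ∈ Submodule.span (ZMod 2) (C ∪ (stdVec n '' A k))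

/-- The lift `t^(m)` of a vector `t ∈ V_K`: `(t^(m))_j = t_{j mod K}`. -/
def liftVec (K m : ℕ) (t : ZMod K → ZMod 2) : ZMod (m * K) → ZMod 2 :=
  fun j => t (ZMod.castHom (dvd_mul_left K m) (ZMod K) j)

/-- The lifted antidote pattern on `m*K` messages associated to `a : Fin d → ℕ`:
`A'_k = {k + i*K : 1 ≤ i ≤ m-1} ∪ {k + a j + i*K : j, 0 ≤ i ≤ m-1}`. -/
def liftedA (K m d : ℕ) (a : Fin d → ℕ) (k : ZMod (m * K)) : Set (ZMod (m * K)) :=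
  {x | ∃ i : ℕ, 1 ≤ i ∧ i ≤ m - 1 ∧ x = k + (i * K : ℕ)} ∪
  {x | ∃ j : Fin d, ∃ i : ℕ, i ≤ m - 1 ∧ x = k + (a j : ℕ) + (i * K : ℕ)}

noncomputable def liftL (K m : ℕ) : (ZMod K → ZMod 2) →ₗ[ZMod 2] (ZMod (m*K) → ZMod 2) :=
  LinearMap.funLeft (ZMod 2) (ZMod 2) (ZMod.castHom (dvd_mul_left K m) (ZMod K))

lemma lift_std (K m : ℕ) (hK : 0 < K) (hm : 0 < m) (k : ZMod (m*K)) :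
    liftVec K m (stdVec K (ZMod.castHom (dvd_mul_left K m) (ZMod K) k)) =
    ∑ i ∈ Finset.range m, stdVec (m*K) (k + ((i*K : ℕ) : ZMod (m*K))) := by
  haveI : NeZero K := ⟨hK.ne'⟩
  haveI : NeZero (m*K) := ⟨(Nat.mul_pos hm hK).ne'⟩
  funext jj
  simp only [liftVec, stdVec, Finset.sum_apply]
  set v := (jj - k).val with hv
  have hvlt : v < m * K := ZMod.val_lt _
  have key : ∀ i : ℕ, i < m → (jj = k + ((i*K : ℕ) : ZMod (m*K)) ↔ v = i * K) := by
    intro i hi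
    have hlt : i * K < m * K := (Nat.mul_lt_mul_right hK).mpr hi
    rw [← sub_eq_iff_eq_add']
    constructor
    · intro h
      rw [hv, h, ZMod.val_cast_of_lt hlt]
    · intro h
      have : jj - k = ((v : ℕ) : ZMod (m*K)) := (ZMod.natCast_rightInverse (jj - k)).symm
      rw [this, h]
  have castiff : (ZMod.castHom (dvd_mul_left K m) (ZMod K) jj =
      ZMod.castHom (dvd_mul_left K m) (ZMod K) k) ↔ K ∣ v := by
    rw [← sub_eq_zero, ← map_sub, ZMod.castHom_apply, ← ZMod.natCast_val,
      ZMod.natCast_eq_zero_iff]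
  by_cases hdvd : K ∣ v
  · obtain ⟨c, hc⟩ := hdvd
    have hcm : c < m := by
      by_contra hcon
      push_neg at hcon
      have h2 : m * K ≤ c * K := Nat.mul_le_mul_right K hcon
      rw [Nat.mul_comm c K] at h2
      omega
    rw [if_pos (castiff.mpr ⟨c, hc⟩)]
    have hsum : ∑ i ∈ Finset.range m, (if jj = k + ((i*K : ℕ) : ZMod (m*K)) then (1:ZMod 2) else 0)
        = ∑ i ∈ Finset.range m, (if i = c then (1:ZMod 2) else 0) := by
      refine Finset.sum_congr rfl (fun i hi => ?_)
      refine if_congr ?_ rfl rfl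
      rw [key i (Finset.mem_range.mp hi)]
      rw [Nat.mul_comm K c] at hc
      constructor
      · intro h; exact Nat.eq_of_mul_eq_mul_right hK (by omega)
      · intro h; subst h; omega
    rw [hsum, Finset.sum_ite_eq' (Finset.range m) c (fun _ => (1 : ZMod 2))]
    simp [hcm]
  · rw [if_neg (fun h => hdvd (castiff.mp h))]
    apply (Finset.sum_eq_zero _).symm
    intro i hi
    rw [if_neg]
    intro h
    exact hdvd ⟨i, by rw [(key i (Finset.mem_range.mp hi)).mp h]; ring⟩

lemma lift_inj (K m : ℕ) (hK : 0 < K) (hm : 0 < m) :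
    Function.Injective (liftVec K m) := by
  haveI : NeZero K := ⟨hK.ne'⟩
  haveI : NeZero (m*K) := ⟨(Nat.mul_pos hm hK).ne'⟩
  intro s t h
  funext c
  have h2 := congrFun h ((c.val : ZMod (m*K)))
  simpa [liftVec, map_natCast, ZMod.natCast_val, ZMod.cast_id] using h2


/-- **Lifting construction (Theorem 1).** If `C` is a valid scalar linear index code of
length `l` for the problem with `K` messages and symmetric antidotes
`A_k = {k + a_1, …, k + a_d}`, then the lifted code `C^(m)` is a valid scalar linear
index code of length `l` for the lifted problem with `m*K` messages. -/
theorem lifting_construction (K m d l : ℕ) (hK : 0 < K) (hm : 0 < m) (hd : 0 < d)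
    (a : Fin d → ℕ) (ha : StrictMono a)
    (ha1 : 1 ≤ a ⟨0, hd⟩) (had : a ⟨d - 1, Nat.sub_lt hd Nat.one_pos⟩ < K)
    (C : Set (ZMod K → ZMod 2))
    (hC : IsIndexCode K (fun k => {x | ∃ j : Fin d, x = k + (a j : ℕ)}) C)
    (hlen : C.ncard = l) :
    IsIndexCode (m * K) (liftedA K m d a) (liftVec K m '' C) ∧
      (liftVec K m '' C).ncard = l := by
  haveI : NeZero K := ⟨hK.ne'⟩
  haveI : NeZero (m*K) := ⟨(Nat.mul_pos hm hK).ne'⟩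
  obtain ⟨hCfin, hCspan⟩ := hC
  refine ⟨⟨hCfin.image _, ?_⟩, by rw [Set.ncard_image_of_injective C (lift_inj K m hK hm), hlen]⟩
  intro k
  set N := Submodule.span (ZMod 2)
    ((liftVec K m '' C) ∪ (stdVec (m*K) '' liftedA K m d a k)) with hN
  have hterm : ∀ i : ℕ, i < m → 1 ≤ i →
      stdVec (m*K) (k + ((i*K : ℕ) : ZMod (m*K))) ∈ N := by
    intro i hi h1
    exact Submodule.subset_span (Or.inr ⟨_, Or.inl ⟨i, h1, Nat.le_sub_one_of_lt hi, rfl⟩, rfl⟩)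
  have hterm2 : ∀ (j : Fin d) (i : ℕ), i < m →
      stdVec (m*K) (k + ((a j : ℕ) : ZMod (m*K)) + ((i*K : ℕ) : ZMod (m*K))) ∈ N := by
    intro j i hi
    exact Submodule.subset_span (Or.inr ⟨_, Or.inr ⟨j, i, Nat.le_sub_one_of_lt hi, rfl⟩, rfl⟩)
  have hCsub : liftVec K m '' C ⊆ (N : Set (ZMod (m*K) → ZMod 2)) :=
    fun x hx => Submodule.subset_span (Or.inl hx)
  set cst := ZMod.castHom (dvd_mul_left K m) (ZMod K) with hcst
  have hmain : liftVec K m (stdVec K (cst k)) ∈ N := by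
    have h1 := hCspan (cst k)
    have h2 : liftL K m (stdVec K (cst k)) ∈
        Submodule.map (liftL K m) (Submodule.span (ZMod 2)
          (C ∪ stdVec K '' {x | ∃ j : Fin d, x = cst k + (a j : ℕ)})) :=
      Submodule.mem_map_of_mem h1
    rw [← Submodule.span_image] at h2
    refine Submodule.span_le.mpr ?_ h2
    rintro x ⟨y, hy | ⟨z, ⟨j, rfl⟩, rfl⟩, rfl⟩
    · exact hCsub ⟨y, hy, rfl⟩
    · show liftVec K m (stdVec K (cst k + ((a j : ℕ) : ZMod K))) ∈ N
      have hce : cst k + ((a j : ℕ) : ZMod K) = cst (k + ((a j : ℕ) : ZMod (m*K))) := by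
        rw [map_add, map_natCast]
      rw [hce, lift_std K m hK hm]
      refine Submodule.sum_mem _ (fun i hi => ?_)
      exact hterm2 j i (Finset.mem_range.mp hi)
  have hsplit : liftVec K m (stdVec K (cst k)) =
      stdVec (m*K) k + ∑ i ∈ Finset.Ico 1 m, stdVec (m*K) (k + ((i*K : ℕ) : ZMod (m*K))) := by
    rw [lift_std K m hK hm, Finset.range_eq_Ico,
      Finset.sum_eq_sum_Ico_succ_bot hm]
    simp
  have : stdVec (m*K) k = liftVec K m (stdVec K (cst k)) -
      ∑ i ∈ Finset.Ico 1 m, stdVec (m*K) (k + ((i*K : ℕ) : ZMod (m*K))) :=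
    eq_sub_of_add_eq hsplit.symm
  rw [this]
  exact Submodule.sub_mem _ hmain (Submodule.sum_mem _
    (fun i hi => hterm i (Finset.mem_Ico.mp hi).2 (Finset.mem_Ico.mp hi).1))
end

section
/- Let K, m, d be positive integers and let a_1 < a_2 < ⋯ < a_d be integers with 1 ≤ a_1 and a_d < K, and for k ∈ ZMod (mK) let A'_k = {k + iK : 1 ≤ i ≤ m−1} ∪ {k + a_j + iK : 1 ≤ j ≤ d, 0 ≤ i ≤ m−1} ⊆ ZMod (mK) be the lifted antidote pattern. Then for every k ∈ ZMod (mK) and every integer j with 0 ≤ j ≤ m−1, one has the set identity A'_{k+jK} = (A'_k ∪ {k}) \ {k + jK}. -/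
lemma cast_inj' (m K : ℕ) (u v : ℕ) (hu : u < m * K) (hv : v < m * K) :
    ((u : ZMod (m * K)) = v) ↔ u = v := by
  rw [ZMod.natCast_eq_natCast_iff', Nat.mod_eq_of_lt hu, Nat.mod_eq_of_lt hv]

lemma addcast (m K : ℕ) (k : ZMod (m*K)) (u v : ℕ) :
    k + ((u*K : ℕ) : ZMod (m*K)) + ((v*K : ℕ) : ZMod (m*K)) = k + (((u+v)*K : ℕ) : ZMod (m*K)) := by
  push_cast; ring

lemma addcast2 (m K : ℕ) (k : ZMod (m*K)) (b u v : ℕ) :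
    k + ((u*K : ℕ) : ZMod (m*K)) + (b : ZMod (m*K)) + ((v*K : ℕ) : ZMod (m*K))
      = k + (b : ZMod (m*K)) + (((u+v)*K : ℕ) : ZMod (m*K)) := by
  push_cast; ring

lemma redcast (m K : ℕ) (w : ℕ) :
    (((w+m)*K : ℕ) : ZMod (m*K)) = ((w*K : ℕ) : ZMod (m*K)) := by
  have : ((w+m)*K : ℕ) = w*K + m*K := by ring
  rw [this, Nat.cast_add, ZMod.natCast_self, add_zero]

lemma eqK (m K : ℕ) (hK : 0 < K) (u v : ℕ) (hu : u < m) (hv : v < m) :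
    (((u*K : ℕ) : ZMod (m*K)) = ((v*K : ℕ) : ZMod (m*K))) ↔ u = v := by
  have hu' : u*K < m*K := Nat.mul_lt_mul_of_lt_of_le hu (le_refl K) hK
  have hv' : v*K < m*K := Nat.mul_lt_mul_of_lt_of_le hv (le_refl K) hK
  rw [cast_inj' m K _ _ hu' hv']
  exact ⟨fun h => Nat.eq_of_mul_eq_mul_right hK h, fun h => by rw [h]⟩

lemma bnd (m K b v : ℕ) (hbK : b < K) (hv : v < m) : b + v*K < m*K :=
  calc b + v*K < K + v*K := by omega
  _ = (v+1)*K := by ring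
  _ ≤ m*K := Nat.mul_le_mul_right K (by omega)

lemma ne_mix (m K b u v : ℕ) (hK : 0 < K) (hb : 1 ≤ b) (hbK : b < K) (hu : u < m) (hv : v < m) :
    ((b + v*K : ℕ) : ZMod (m*K)) ≠ ((u*K : ℕ) : ZMod (m*K)) := by
  have hu' : u*K < m*K := Nat.mul_lt_mul_of_lt_of_le hu (le_refl K) hK
  intro h
  rw [cast_inj' m K _ _ (bnd m K b v hbK hv) hu'] at h
  have h2 := congrArg (· % K) h
  simp only [Nat.add_mul_mod_self_right, Nat.mul_mod_left, Nat.mod_eq_of_lt hbK] at h2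
  omega



/-- **Antidote structure identity (equation (7) of the paper).** For the lifted antidote
pattern, `A'_{k+jK} = (A'_k ∪ {k}) \ {k + jK}` for every `0 ≤ j ≤ m-1`. -/
theorem lifted_antidote_structure (K m d : ℕ) (hK : 0 < K) (hm : 0 < m) (hd : 0 < d)
    (a : Fin d → ℕ) (ha : StrictMono a)
    (ha1 : 1 ≤ a ⟨0, hd⟩) (had : a ⟨d - 1, Nat.sub_lt hd Nat.one_pos⟩ < K) :
    ∀ (k : ZMod (m * K)) (j : ℕ), j ≤ m - 1 →
      liftedA K m d a (k + (j * K : ℕ)) =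
        (liftedA K m d a k ∪ {k}) \ {k + ((j * K : ℕ) : ZMod (m * K))} := by
  intro k j hj
  have hjm : j < m := by omega
  have haK : ∀ l : Fin d, 1 ≤ a l ∧ a l < K := by
    intro l
    constructor
    · exact le_trans ha1 (ha.monotone (by simp [Fin.le_def]))
    · exact lt_of_le_of_lt (ha.monotone (by simp [Fin.le_def]; omega)) had
  ext x
  simp only [liftedA, Set.mem_union, Set.mem_setOf_eq, Set.mem_diff, Set.mem_singleton_iff]
  constructor
  · rintro (⟨i, hi1, hi2, rfl⟩ | ⟨l, i, hi, rfl⟩)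
    · rw [addcast]
      by_cases hc : j + i ≤ m - 1
      · refine ⟨Or.inl (Or.inl ⟨j+i, by omega, hc, rfl⟩), ?_⟩
        intro h
        have h2 := add_left_cancel h
        have := (eqK m K hK _ _ (by omega) hjm).mp h2
        omega
      · rw [show j + i = (j+i-m) + m from by omega, redcast]
        by_cases hw0 : j + i - m = 0
        · rw [hw0]
          refine ⟨Or.inr (by simp), ?_⟩
          intro h
          have h2 := add_left_cancel h
          have := (eqK m K hK _ _ (by omega) hjm).mp h2
          omega
        · refine ⟨Or.inl (Or.inl ⟨j+i-m, by omega, by omega, rfl⟩), ?_⟩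
          intro h
          have h2 := add_left_cancel h
          have := (eqK m K hK _ _ (by omega) hjm).mp h2
          omega
    · rw [addcast2]
      obtain ⟨hl1, hl2⟩ := haK l
      have key : ∃ w, w < m ∧ (((j+i)*K : ℕ) : ZMod (m*K)) = ((w*K : ℕ) : ZMod (m*K)) := by
        by_cases hc : j+i ≤ m-1
        · exact ⟨j+i, by omega, rfl⟩
        · exact ⟨j+i-m, by omega, by nth_rewrite 1 [show j+i = (j+i-m)+m from by omega]; rw [redcast]⟩
      obtain ⟨w, hw, hweq⟩ := key
      rw [hweq]
      refine ⟨Or.inl (Or.inr ⟨l, w, by omega, rfl⟩), ?_⟩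
      intro h
      have hx : k + ((a l : ℕ) : ZMod (m*K)) + ((w*K : ℕ) : ZMod (m*K))
          = k + ((a l + w*K : ℕ) : ZMod (m*K)) := by push_cast; ring
      rw [hx] at h
      exact ne_mix m K (a l) j w hK hl1 hl2 hjm hw (add_left_cancel h)
  · rintro ⟨(⟨i, hi1, hi2, rfl⟩ | ⟨l, i, hi, rfl⟩) | rfl, hne⟩
    · have hij : i ≠ j := by
        intro h; exact hne (by rw [h])
      by_cases hcase : j ≤ i
      · refine Or.inl ⟨i - j, by omega, by omega, ?_⟩
        rw [addcast, show j + (i-j) = i from by omega]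
      · refine Or.inl ⟨i + m - j, by omega, by omega, ?_⟩
        rw [addcast, show j + (i+m-j) = i + m from by omega, redcast]
    · by_cases hcase : j ≤ i
      · exact Or.inr ⟨l, i - j, by omega, by rw [addcast2, show j + (i-j) = i from by omega]⟩
      · exact Or.inr ⟨l, i + m - j, by omega,
          by rw [addcast2, show j + (i+m-j) = i + m from by omega, redcast]⟩
    · have hj0 : j ≠ 0 := by
        rintro rfl; exact hne (by simp)
      refine Or.inl ⟨m - j, by omega, by omega, ?_⟩
      rw [addcast, show j + (m-j) = 0 + m from by omega, redcast]
      simp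
end

section
/- Let K, d be positive integers and let a_1 < a_2 < ⋯ < a_d be integers with 1 ≤ a_1 and a_d < K, and consider the index coding problem with K messages and antidotes A_k = {k + a_1, …, k + a_d} ⊆ ZMod K. Then every valid scalar linear index code for this problem has length at least K − a_d. -/
/-- **Lower bound on the length.** Every valid scalar linear index code for the problem
with `K` messages and antidotes `A_k = {k + a_1, …, k + a_d}` has length at least
`K - a_d`. -/
theorem index_code_length_lower_bound (K d : ℕ) (hK : 0 < K) (hd : 0 < d)
    (a : Fin d → ℕ) (ha : StrictMono a)
    (ha1 : 1 ≤ a ⟨0, hd⟩) (had : a ⟨d - 1, Nat.sub_lt hd Nat.one_pos⟩ < K)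
    (C : Set (ZMod K → ZMod 2))
    (hC : IsIndexCode K (fun k => {x | ∃ j : Fin d, x = k + (a j : ℕ)}) C) :
    K - a ⟨d - 1, Nat.sub_lt hd Nat.one_pos⟩ ≤ C.ncard := by
  haveI : NeZero K := ⟨hK.ne'⟩
  haveI : Fact (Nat.Prime 2) := ⟨Nat.prime_two⟩
  set ad := a ⟨d - 1, Nat.sub_lt hd Nat.one_pos⟩ with had_def
  set T : Set (ZMod K) := {x | K - ad ≤ x.val} with hT_def
  set S : Set (ZMod K → ZMod 2) := stdVec K '' T with hS_def
  -- bounds on the a j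
  have haj_le : ∀ j : Fin d, a j ≤ ad := by
    intro j
    exact ha.monotone (by simp [Fin.le_def, Nat.le_sub_one_of_lt j.isLt])
  have haj_ge : ∀ j : Fin d, 1 ≤ a j := by
    intro j
    exact le_trans ha1 (ha.monotone (by simp [Fin.le_def]))
  -- the key induction: every standard basis vector is in the span of C ∪ S
  have key : ∀ m : ℕ, ∀ k : ZMod K, K ≤ k.val + m →
      stdVec K k ∈ Submodule.span (ZMod 2) (C ∪ S) := by
    intro m
    induction m with
    | zero =>
      intro k hk
      exact absurd hk (by simpa using (ZMod.val_lt k).not_ge)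
    | succ m ih =>
      intro k hk
      by_cases hcase : K - ad ≤ k.val
      · exact Submodule.subset_span (Or.inr ⟨k, hcase, rfl⟩)
      · push_neg at hcase
        refine Submodule.span_le.mpr ?_ (hC.2 k)
        rintro x (hx | ⟨y, ⟨j, rfl⟩, rfl⟩)
        · exact Submodule.subset_span (Or.inl hx)
        · have hval : (k + ((a j : ℕ) : ZMod K)).val = k.val + a j := by
            have h1 : a j < K := lt_of_le_of_lt (haj_le j) had
            have h2 : k.val + a j < K := by
              have := haj_le j; omega
            rw [ZMod.val_add, ZMod.val_natCast, Nat.mod_eq_of_lt h1,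
              Nat.mod_eq_of_lt h2]
          apply ih
          rw [hval]
          have := haj_ge j
          omega
  -- hence the span of C ∪ S is everything
  have hspan : Submodule.span (ZMod 2) (C ∪ S) = ⊤ := by
    have hst : ∀ j : ZMod K, stdVec K j = Pi.single j (1 : ZMod 2) := by
      intro j; funext i; simp [stdVec, Pi.single_apply]
    rw [eq_top_iff, ← (Pi.basisFun (ZMod 2) (ZMod K)).span_eq]
    apply Submodule.span_le.mpr
    rintro x ⟨j, rfl⟩
    have : Pi.basisFun (ZMod 2) (ZMod K) j = stdVec K j := by
      rw [hst j]; simp [Pi.basisFun_apply]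
    rw [this]
    exact key K j (Nat.le_add_left K _)
  -- cardinality estimates
  have hfin : (C ∪ S).Finite := Set.toFinite _
  have hcard : K ≤ (C ∪ S).ncard := by
    have h1 : Module.finrank (ZMod 2)
        (Submodule.span (ZMod 2) ((hfin.toFinset : Finset (ZMod K → ZMod 2)) : Set (ZMod K → ZMod 2)))
        ≤ hfin.toFinset.card := finrank_span_finset_le_card _
    rw [hfin.coe_toFinset, hspan] at h1
    have h2 : Module.finrank (ZMod 2) (⊤ : Submodule (ZMod 2) (ZMod K → ZMod 2))
        = Module.finrank (ZMod 2) (ZMod K → ZMod 2) := finrank_top _ _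
    have h3 : Module.finrank (ZMod 2) (ZMod K → ZMod 2) = K := by
      simp [Module.finrank_pi]
    rw [h2, h3] at h1
    rwa [Set.ncard_eq_toFinset_card _ hfin]
  have hS : S.ncard ≤ ad := by
    have hT : T ⊆ Set.range (fun i : Fin ad => ((K - ad + (i : ℕ) : ℕ) : ZMod K)) := by
      intro x hx
      have hx' : K - ad ≤ x.val := hx
      have hxlt : x.val < K := ZMod.val_lt x
      refine ⟨⟨x.val - (K - ad), by omega⟩, ?_⟩
      have : K - ad + (x.val - (K - ad)) = x.val := by omega
      simp only [this]
      exact ZMod.natCast_zmod_val x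
    calc S.ncard ≤ T.ncard := Set.ncard_image_le (Set.toFinite T)
      _ ≤ (Set.range (fun i : Fin ad => ((K - ad + (i : ℕ) : ℕ) : ZMod K))).ncard :=
          Set.ncard_le_ncard hT (Set.toFinite _)
      _ ≤ (Set.univ : Set (Fin ad)).ncard := by
          rw [← Set.image_univ]
          exact Set.ncard_image_le (Set.toFinite _)
      _ = ad := by simp [Set.ncard_univ]
  have := Set.ncard_union_le C S
  omega
end

section
/- Let K, d be positive integers and let a_1 < a_2 < ⋯ < a_d be integers with 1 ≤ a_1 and a_d < K. Suppose C is a valid scalar linear index code of length exactly K − a_d for the problem with K messages and antidotes A_k = {k + a_1, …, k + a_d} ⊆ ZMod K. Then for every positive integer m: (i) the lifted code C^(m) is a valid scalar linear index code of length K − a_d for the lifted problem with mK messages and antidotes A'_k = {k + iK : 1 ≤ i ≤ m−1} ∪ {k + a_j + iK : 1 ≤ j ≤ d, 0 ≤ i ≤ m−1} ⊆ ZMod (mK); and (ii) every valid scalar linear index code for the lifted problem has length at least K − a_d. In particular C (the case m = 1) and all lifted codes C^(m) are scalar linear index codes of optimal length. -/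
section aux
variable {K m : ℕ}

variable {K m : ℕ}

lemma castHom_eq_iff (hK : 0 < K) (hm : 0 < m) (k j : ZMod (m * K)) :
    ZMod.castHom (dvd_mul_left K m) (ZMod K) j = ZMod.castHom (dvd_mul_left K m) (ZMod K) k ↔
      ∃ i, i < m ∧ j = k + ((i * K : ℕ) : ZMod (m * K)) := by
  haveI : NeZero (m * K) := ⟨(Nat.mul_pos hm hK).ne'⟩
  constructor
  · intro h
    have h0 : ZMod.castHom (dvd_mul_left K m) (ZMod K) (j - k) = 0 := by
      rw [map_sub, h, sub_self]
    have hval : ZMod.castHom (dvd_mul_left K m) (ZMod K) (j - k)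
        = (((j - k).val : ℕ) : ZMod K) := by
      conv_lhs => rw [← ZMod.natCast_zmod_val (j - k)]
      rw [map_natCast]
    rw [hval, ZMod.natCast_eq_zero_iff] at h0
    obtain ⟨c, hc⟩ := h0
    have hvlt : (j - k).val < m * K := ZMod.val_lt _
    refine ⟨c, ?_, ?_⟩
    · rw [hc] at hvlt
      by_contra hcm
      push_neg at hcm
      exact absurd hvlt (not_lt.2 (by calc m * K ≤ c * K := Nat.mul_le_mul_right _ hcm
            _ = K * c := Nat.mul_comm _ _))
    · have hjk : (((j - k).val : ℕ) : ZMod (m*K)) = j - k := ZMod.natCast_zmod_val _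
      rw [hc] at hjk
      rw [Nat.mul_comm c K]
      exact sub_eq_iff_eq_add'.mp hjk.symm
  · rintro ⟨i, _, rfl⟩
    have h0 : ((i * K : ℕ) : ZMod K) = 0 :=
      (ZMod.natCast_eq_zero_iff _ _).2 ⟨i, Nat.mul_comm _ _⟩
    rw [map_add, map_natCast, h0, add_zero]

lemma addMul_inj (hK : 0 < K) {i i' : ℕ} (hi : i < m) (hi' : i' < m) (k : ZMod (m * K))
    (h : k + ((i * K : ℕ) : ZMod (m * K)) = k + ((i' * K : ℕ) : ZMod (m * K))) : i = i' := by
  have h2 := add_left_cancel h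
  have h3 := congrArg ZMod.val h2
  rw [ZMod.val_natCast_of_lt (by exact (Nat.mul_lt_mul_right hK).2 hi),
    ZMod.val_natCast_of_lt (by exact (Nat.mul_lt_mul_right hK).2 hi')] at h3
  exact Nat.eq_of_mul_eq_mul_right hK h3

lemma lift_stdVec (hK : 0 < K) (hm : 0 < m) (k : ZMod (m * K)) :
    liftVec K m (stdVec K (ZMod.castHom (dvd_mul_left K m) (ZMod K) k)) =
      ∑ i ∈ Finset.range m, stdVec (m * K) (k + ((i * K : ℕ) : ZMod (m * K))) := by
  funext j
  simp only [liftVec, stdVec, Finset.sum_apply]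
  by_cases h : ZMod.castHom (dvd_mul_left K m) (ZMod K) j
      = ZMod.castHom (dvd_mul_left K m) (ZMod K) k
  · obtain ⟨i0, hi0m, hj⟩ := (castHom_eq_iff hK hm k j).1 h
    rw [if_pos h]
    rw [Finset.sum_congr rfl (fun i hi => show
        (if j = k + ((i * K : ℕ) : ZMod (m*K)) then (1 : ZMod 2) else 0)
          = if i = i0 then 1 else 0 from
      if_congr ⟨fun hji => addMul_inj hK (Finset.mem_range.1 hi) hi0m k (hji ▸ hj),
        fun hii => hii ▸ hj⟩ rfl rfl)]
    rw [Finset.sum_ite_eq' (Finset.range m) i0 (fun _ => (1 : ZMod 2)),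
      if_pos (Finset.mem_range.2 hi0m)]
  · rw [if_neg h, Finset.sum_eq_zero]
    intro i hi
    rw [if_neg]
    intro hji
    exact h ((castHom_eq_iff hK hm k j).2 ⟨i, Finset.mem_range.1 hi, hji⟩)

lemma liftVec_inj (hK : 0 < K) (hm : 0 < m) : Function.Injective (liftVec K m) := by
  haveI : NeZero K := ⟨hK.ne'⟩
  haveI : NeZero (m * K) := ⟨(Nat.mul_pos hm hK).ne'⟩
  intro t t' h
  funext x
  have hx : ZMod.castHom (dvd_mul_left K m) (ZMod K) ((x.val : ℕ) : ZMod (m * K)) = x := by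
    rw [map_natCast, ZMod.natCast_zmod_val]
  have h2 := congrFun h ((x.val : ℕ) : ZMod (m * K))
  simpa [liftVec, hx] using h2

end aux

lemma lifted_valid (K d : ℕ) (hK : 0 < K) (a : Fin d → ℕ)
    (C : Set (ZMod K → ZMod 2))
    (hC : IsIndexCode K (fun k => {x | ∃ j : Fin d, x = k + (a j : ℕ)}) C)
    (m : ℕ) (hm : 0 < m) :
    IsIndexCode (m * K) (liftedA K m d a) (liftVec K m '' C) := by
  refine ⟨hC.1.image _, fun k => ?_⟩
  set L := LinearMap.funLeft (ZMod 2) (ZMod 2) (ZMod.castHom (dvd_mul_left K m) (ZMod K)) with hLdef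
  have hLlift : ∀ t, liftVec K m t = L t := fun t => rfl
  set kb := ZMod.castHom (dvd_mul_left K m) (ZMod K) k with hkb
  set S := Submodule.span (ZMod 2)
    ((liftVec K m '' C) ∪ (stdVec (m * K) '' liftedA K m d a k)) with hS
  have h1 : L (stdVec K kb) ∈ Submodule.map L (Submodule.span (ZMod 2)
      (C ∪ (stdVec K '' {x | ∃ j : Fin d, x = kb + (a j : ℕ)}))) :=
    Submodule.mem_map_of_mem (hC.2 kb)
  rw [Submodule.map_span, Set.image_union] at h1
  have h2 : L (stdVec K kb) ∈ S := by
    refine Submodule.span_le.2 ?_ h1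
    rintro v (⟨t, htC, rfl⟩ | ⟨w, ⟨x, ⟨jj, rfl⟩, rfl⟩, rfl⟩)
    · exact Submodule.subset_span (Or.inl ⟨t, htC, rfl⟩)
    · have hcast : kb + ((a jj : ℕ) : ZMod K)
          = ZMod.castHom (dvd_mul_left K m) (ZMod K) (k + ((a jj : ℕ) : ZMod (m * K))) := by
        rw [map_add, map_natCast]
      rw [← hLlift, hcast, lift_stdVec hK hm (k + ((a jj : ℕ) : ZMod (m * K)))]
      refine Submodule.sum_mem _ (fun i hi => Submodule.subset_span (Or.inr ⟨_, ?_, rfl⟩))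
      exact Or.inr ⟨jj, i, by have := Finset.mem_range.1 hi; omega, rfl⟩
  have hsum := lift_stdVec hK hm k
  rw [hLlift] at hsum
  rw [Finset.sum_range_eq_add_Ico _ hm] at hsum
  have hzero : k + ((0 * K : ℕ) : ZMod (m * K)) = k := by simp
  rw [hzero] at hsum
  have hk_eq : stdVec (m * K) k = L (stdVec K kb)
      - ∑ i ∈ Finset.Ico 1 m, stdVec (m * K) (k + ((i * K : ℕ) : ZMod (m * K))) := by
    rw [hsum, add_sub_cancel_right]
  rw [hk_eq]
  refine Submodule.sub_mem _ h2 (Submodule.sum_mem _ (fun i hi => ?_))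
  have hi' := Finset.mem_Ico.1 hi
  exact Submodule.subset_span (Or.inr ⟨_, Or.inl ⟨i, hi'.1, by omega, rfl⟩, rfl⟩)


lemma lifted_lower (K d : ℕ) (hK : 0 < K) (hd : 0 < d)
    (a : Fin d → ℕ) (ha : StrictMono a)
    (ha1 : 1 ≤ a ⟨0, hd⟩) (had : a ⟨d - 1, Nat.sub_lt hd Nat.one_pos⟩ < K)
    (m : ℕ) (hm : 0 < m) (C' : Set (ZMod (m * K) → ZMod 2))
    (hC' : IsIndexCode (m * K) (liftedA K m d a) C') :
    K - a ⟨d - 1, Nat.sub_lt hd Nat.one_pos⟩ ≤ C'.ncard := by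
  haveI : NeZero (m * K) := ⟨(Nat.mul_pos hm hK).ne'⟩
  set ad := a ⟨d - 1, Nat.sub_lt hd Nat.one_pos⟩ with had_def
  set r := K - ad with hr_def
  have haj_le : ∀ j : Fin d, a j ≤ ad :=
    fun j => ha.monotone (by rw [Fin.mk_le_mk]; omega)
  have haj_ge : ∀ j : Fin d, 1 ≤ a j :=
    fun j => le_trans ha1 (ha.monotone (by rw [Fin.le_def]; simp))
  have had1 : 1 ≤ ad := haj_ge _
  have hrK : r < K := by omega
  have hKmK : K ≤ m * K := Nat.le_mul_of_pos_left K hm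
  set W := Submodule.span (ZMod 2) C' with hW
  set U := Submodule.span (ZMod 2)
    (stdVec (m * K) '' {x : ZMod (m * K) | r ≤ x.val}) with hU
  -- main inductive claim
  have key : ∀ s n : ℕ, r ≤ n + s → n < r →
      stdVec (m * K) ((n : ℕ) : ZMod (m * K)) ∈ W ⊔ U := by
    intro s
    induction s with
    | zero => intro n h1 h2; omega
    | succ s ih =>
      intro n h1 h2
      refine Submodule.span_le.2 ?_ (hC'.2 ((n : ℕ) : ZMod (m * K)))
      rintro v (hv | ⟨x, hx, rfl⟩)
      · exact Submodule.mem_sup_left (Submodule.subset_span hv)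
      rcases hx with ⟨i, hi1, hi2, rfl⟩ | ⟨jj, i, hi2, rfl⟩
      · -- x = n + i*K
        have him : i < m := by omega
        have hlt : n + i * K < m * K := by
          calc n + i * K < K + i * K := by omega
            _ = (i + 1) * K := by ring
            _ ≤ m * K := Nat.mul_le_mul_right K him
        have hx' : ((n : ℕ) : ZMod (m * K)) + ((i * K : ℕ) : ZMod (m * K))
            = (((n + i * K : ℕ)) : ZMod (m * K)) := by push_cast; ring
        rw [hx']
        refine Submodule.mem_sup_right (Submodule.subset_span ⟨_, ?_, rfl⟩)
        show r ≤ (((n + i * K : ℕ)) : ZMod (m * K)).val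
        rw [ZMod.val_natCast_of_lt hlt]
        have : K ≤ i * K := Nat.le_mul_of_pos_left K hi1
        omega
      · -- x = n + a jj + i*K
        have him : i < m := by omega
        have hja : a jj ≤ ad := haj_le jj
        have hja1 : 1 ≤ a jj := haj_ge jj
        have hnaj : n + a jj < K := by omega
        have hlt : n + a jj + i * K < m * K := by
          calc n + a jj + i * K < K + i * K := by omega
            _ = (i + 1) * K := by ring
            _ ≤ m * K := Nat.mul_le_mul_right K him
        have hx' : ((n : ℕ) : ZMod (m * K)) + ((a jj : ℕ) : ZMod (m * K))
            + ((i * K : ℕ) : ZMod (m * K))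
            = (((n + a jj + i * K : ℕ)) : ZMod (m * K)) := by push_cast; ring
        rw [hx']
        by_cases hcase : r ≤ n + a jj + i * K
        · refine Submodule.mem_sup_right (Submodule.subset_span ⟨_, ?_, rfl⟩)
          show r ≤ (((n + a jj + i * K : ℕ)) : ZMod (m * K)).val
          rw [ZMod.val_natCast_of_lt hlt]; exact hcase
        · push_neg at hcase
          exact ih (n + a jj + i * K) (by omega) hcase
  -- projection to coordinates with val < r
  set ι := {x : ZMod (m * K) // x.val < r} with hι
  set π := LinearMap.funLeft (ZMod 2) (ZMod 2) (Subtype.val : ι → ZMod (m * K)) with hπ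
  set S := Submodule.span (ZMod 2) (π '' C') with hSdef
  have hπU : Submodule.map π U ≤ S := by
    rw [hU, Submodule.map_span]
    refine Submodule.span_le.2 ?_
    rintro v ⟨w, ⟨x, hx, rfl⟩, rfl⟩
    have h0 : π (stdVec (m * K) x) = 0 := by
      funext p
      show (if (p : ZMod (m * K)) = x then (1 : ZMod 2) else 0) = 0
      rw [if_neg]
      intro hpx
      have hp2 := p.2
      rw [hpx] at hp2
      have hx' : r ≤ x.val := hx
      omega
    rw [h0]
    exact Submodule.zero_mem _
  have hproj : ∀ n : ℕ, n < r → π (stdVec (m * K) ((n : ℕ) : ZMod (m * K))) ∈ S := by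
    intro n hn
    have h := Submodule.mem_map_of_mem (f := π) (key r n (by omega) hn)
    rw [Submodule.map_sup] at h
    have hWm : Submodule.map π W = S := by rw [hW, hSdef, Submodule.map_span]
    rw [hWm] at h
    exact (sup_le le_rfl hπU) h
  have hvaln : ∀ n : ℕ, n < r → ((n : ℕ) : ZMod (m * K)).val = n :=
    fun n hn => ZMod.val_natCast_of_lt (by omega)
  set emb : Fin r → ι := fun n => ⟨((n : ℕ) : ZMod (m * K)), by rw [hvaln n n.2]; exact n.2⟩
    with hemb_def
  have hemb : Function.Injective emb := by
    intro n1 n2 h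
    have h2 : ((n1 : ℕ) : ZMod (m * K)).val = ((n2 : ℕ) : ZMod (m * K)).val := by
      rw [Subtype.ext_iff] at h
      exact congrArg ZMod.val h
    rw [hvaln n1 n1.2, hvaln n2 n2.2] at h2
    exact Fin.ext h2
  have hsingle : ∀ n : Fin r, π (stdVec (m * K) ((n : ℕ) : ZMod (m * K)))
      = Pi.single (emb n) (1 : ZMod 2) := by
    intro n
    funext p
    show (if (p : ZMod (m * K)) = ((n : ℕ) : ZMod (m * K)) then (1 : ZMod 2) else 0) = _
    rw [Pi.single_apply]
    exact if_congr ⟨fun h => Subtype.ext h, fun h => congrArg Subtype.val h⟩ rfl rfl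
  set g : Fin r → (ι → ZMod 2) := fun n => Pi.single (emb n) 1 with hg
  have hli : LinearIndependent (ZMod 2) g := by
    have hbase : LinearIndependent (ZMod 2) (fun p : ι => Pi.single p (1 : ZMod 2)) := by
      have h0 := (Pi.basisFun (ZMod 2) ι).linearIndependent
      have heq : (fun p : ι => Pi.single p (1 : ZMod 2)) = ⇑(Pi.basisFun (ZMod 2) ι) := by
        funext p
        rw [Pi.basisFun_apply]
      rw [heq]
      exact h0
    exact hbase.comp emb hemb
  have hrange : Set.range g ⊆ S := by
    rintro v ⟨n, rfl⟩
    have hp := hproj n n.2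
    rw [hsingle n] at hp
    exact hp
  have hfinS : (π '' C').Finite := hC'.1.image _
  haveI := hfinS.fintype
  have hle1 : Module.finrank (ZMod 2) (Submodule.span (ZMod 2) (Set.range g))
      ≤ Module.finrank (ZMod 2) S :=
    Submodule.finrank_mono (Submodule.span_le.2 hrange)
  have heq : Module.finrank (ZMod 2) (Submodule.span (ZMod 2) (Set.range g)) = r := by
    rw [finrank_span_eq_card hli, Fintype.card_fin]
  have hle2 : Module.finrank (ZMod 2) S ≤ (π '' C').ncard := by
    have := finrank_span_le_card (R := ZMod 2) (π '' C')
    rwa [← Set.ncard_eq_toFinset_card'] at this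
  have hle3 : (π '' C').ncard ≤ C'.ncard := Set.ncard_image_le hC'.1
  omega

/-- **Theorem 2 (optimality of lifted codes).** If `C` is a valid scalar linear index code
of length exactly `K - a_d` for the problem with `K` messages and antidotes
`A_k = {k + a_1, …, k + a_d}`, then for every `m ≥ 1`: (i) the lifted code `C^(m)` is a
valid scalar linear index code of length `K - a_d` for the lifted problem with `m*K`
messages; (ii) every valid scalar linear index code for the lifted problem has length at
least `K - a_d`.  In particular `C` and all the lifted codes are of optimal length. -/
theorem lifted_codes_optimal (K d : ℕ) (hK : 0 < K) (hd : 0 < d)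
    (a : Fin d → ℕ) (ha : StrictMono a)
    (ha1 : 1 ≤ a ⟨0, hd⟩) (had : a ⟨d - 1, Nat.sub_lt hd Nat.one_pos⟩ < K)
    (C : Set (ZMod K → ZMod 2))
    (hC : IsIndexCode K (fun k => {x | ∃ j : Fin d, x = k + (a j : ℕ)}) C)
    (hlen : C.ncard = K - a ⟨d - 1, Nat.sub_lt hd Nat.one_pos⟩) :
    ∀ m : ℕ, 0 < m →
      (IsIndexCode (m * K) (liftedA K m d a) (liftVec K m '' C) ∧
        (liftVec K m '' C).ncard = K - a ⟨d - 1, Nat.sub_lt hd Nat.one_pos⟩) ∧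
      (∀ C' : Set (ZMod (m * K) → ZMod 2),
        IsIndexCode (m * K) (liftedA K m d a) C' →
          K - a ⟨d - 1, Nat.sub_lt hd Nat.one_pos⟩ ≤ C'.ncard) := by
  intro m hm
  refine ⟨⟨lifted_valid K d hK a C hC m hm, ?_⟩,
    fun C' hC' => lifted_lower K d hK hd a ha ha1 had m hm C' hC'⟩
  rw [Set.ncard_image_of_injective C (liftVec_inj hK hm), hlen]
end

section
/- Let K, D, m be positive integers with D < K and D dividing K. Consider the index coding problem with mK messages and antidotes A'_k = {k + iK : 1 ≤ i ≤ m−1} ∪ {k + D + iK : 0 ≤ i ≤ m−1} ⊆ ZMod (mK) for each k ∈ ZMod (mK). Then the set C^(m) = { e'_{i+(j−1)D} + e'_{i+jD} : 1 ≤ i ≤ D, 1 ≤ j ≤ K/D − 1 }, where e'_l = Σ_{t=0}^{m−1} e_{l+tK} ∈ V_{mK}, is a valid scalar linear index code of length K − D for this problem, and moreover every valid scalar linear index code for this problem has length at least K − D. -/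
/-- `e'_l = Σ_{t=0}^{m-1} e_{l+tK} ∈ V_{mK}`. -/
def eSum (K m : ℕ) (l : ℕ) : ZMod (m * K) → ZMod 2 :=
  ∑ t ∈ Finset.range m, stdVec (m * K) ((l + t * K : ℕ))

lemma cast_inj_of_lt {n : ℕ} {a b : ℕ} (ha : a < n) (hb : b < n) :
    ((a : ZMod n) = (b : ZMod n)) ↔ a = b := by
  rw [ZMod.natCast_eq_natCast_iff]
  constructor
  · intro h; simpa [Nat.ModEq, Nat.mod_eq_of_lt ha, Nat.mod_eq_of_lt hb] using h
  · intro h; rw [h]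

lemma stdVec_congr {n : ℕ} {a b : ℕ} (h : a % n = b % n) :
    stdVec n (a : ZMod n) = stdVec n (b : ZMod n) := by
  have : ((a : ZMod n)) = (b : ZMod n) := by
    rw [ZMod.natCast_eq_natCast_iff]; exact h
  rw [this]

lemma vec_add_self {n : ℕ} (v : ZMod n → ZMod 2) : v + v = 0 := by
  funext x
  change v x + v x = 0
  exact CharTwo.add_self_eq_zero _

lemma eSum_add_K {K m : ℕ} (hK : 0 < K) (hm : 0 < m) (l : ℕ) :
    eSum K m (l + K) = eSum K m l := by
  obtain ⟨m', rfl⟩ := Nat.exists_eq_succ_of_ne_zero hm.ne'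
  unfold eSum
  have h1 : ∀ t : ℕ, l + K + t * K = l + (t+1) * K := fun t => by ring
  simp only [h1]
  rw [Finset.sum_range_succ, Finset.sum_range_succ']
  congr 1
  have : (l + (m' + 1) * K) % ((m'+1) * K) = (l + 0 * K) % ((m'+1)*K) := by
    simp [Nat.add_mul_mod_self_right]
  exact stdVec_congr this

lemma eSum_mod {K m : ℕ} (hK : 0 < K) (hm : 0 < m) {a b : ℕ} (h : a % K = b % K) :
    eSum K m a = eSum K m b := by
  have key : ∀ c l, eSum K m (l + c * K) = eSum K m l := by
    intro c
    induction c with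
    | zero => simp
    | succ c ih =>
      intro l
      have : l + (c+1) * K = (l + c * K) + K := by ring
      rw [this, eSum_add_K hK hm, ih]
  have ha : eSum K m a = eSum K m (a % K) := by
    conv_lhs => rw [← Nat.mod_add_div a K]
    rw [show a % K + K * (a / K) = a % K + (a / K) * K by ring, key]
  have hb : eSum K m b = eSum K m (b % K) := by
    conv_lhs => rw [← Nat.mod_add_div b K]
    rw [show b % K + K * (b / K) = b % K + (b / K) * K by ring, key]
  rw [ha, hb, h]

lemma eSum_apply {K m : ℕ} (hm : 0 < m) {a x : ℕ} (ha : a < K) (hx : x < m * K) :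
    eSum K m a ((x : ℕ) : ZMod (m * K)) = if x % K = a then 1 else 0 := by
  have hK : 0 < K := lt_of_le_of_lt (Nat.zero_le _) ha
  unfold eSum
  rw [Finset.sum_apply]
  have hterm : ∀ t ∈ Finset.range m,
      stdVec (m * K) ((a + t * K : ℕ)) ((x : ℕ) : ZMod (m * K))
        = if t = x / K ∧ x % K = a then (1 : ZMod 2) else 0 := by
    intro t ht
    rw [Finset.mem_range] at ht
    have hb : a + t * K < m * K := by
      calc a + t * K < K + t * K := by omega
        _ = (t + 1) * K := by ring
        _ ≤ m * K := Nat.mul_le_mul_right K ht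
    have hcond : (((x : ℕ) : ZMod (m * K)) = ((a + t * K : ℕ) : ZMod (m * K)))
        ↔ (t = x / K ∧ x % K = a) := by
      rw [cast_inj_of_lt hx hb]
      constructor
      · rintro rfl
        constructor
        · rw [Nat.add_mul_div_right _ _ hK, Nat.div_eq_of_lt ha]; ring
        · rw [Nat.add_mul_mod_self_right, Nat.mod_eq_of_lt ha]
      · rintro ⟨rfl, h2⟩
        conv_lhs => rw [← Nat.mod_add_div x K]
        rw [h2]; ring
    unfold stdVec
    rw [if_congr hcond rfl rfl]
  rw [Finset.sum_congr rfl hterm]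
  by_cases hP : x % K = a
  · simp only [hP, and_true]
    rw [Finset.sum_ite_eq' (Finset.range m) (x / K) (fun _ => (1 : ZMod 2))]
    rw [if_pos (Finset.mem_range.2 (Nat.div_lt_of_lt_mul (by rwa [mul_comm] at hx)))]
    simp
  · simp [hP]

def codeSet (K D m : ℕ) : Set (ZMod (m * K) → ZMod 2) :=
  {v | ∃ i j : ℕ, 1 ≤ i ∧ i ≤ D ∧ 1 ≤ j ∧ j ≤ K / D - 1 ∧
      v = eSum K m (i + (j - 1) * D) + eSum K m (i + j * D)}

lemma code_step {K D m : ℕ} {i j : ℕ} (hi1 : 1 ≤ i) (hi2 : i ≤ D)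
    (hj : j + 1 ≤ K / D - 1) :
    eSum K m (i + j * D) + eSum K m (i + (j + 1) * D)
      ∈ Submodule.span (ZMod 2) (codeSet K D m) := by
  apply Submodule.subset_span
  exact ⟨i, j + 1, hi1, hi2, by omega, hj, by simp⟩

lemma tel {K D m : ℕ} (hK : 0 < K) (hD : 0 < D) (hm : 0 < m) :
    ∀ j, j ≤ K / D - 1 → ∀ i, 1 ≤ i → i ≤ D →
      eSum K m i + eSum K m (i + j * D) ∈ Submodule.span (ZMod 2) (codeSet K D m) := by
  intro j
  induction j with
  | zero =>
    intro _ i _ _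
    simp only [Nat.zero_mul, Nat.add_zero, zero_mul, add_zero]
    rw [vec_add_self]
    exact Submodule.zero_mem _
  | succ j ih =>
    intro hj i hi1 hi2
    have h1 : eSum K m i + eSum K m (i + j * D) ∈ _ := ih (by omega) i hi1 hi2
    have h2 := code_step (K := K) (m := m) hi1 hi2 hj
    have key : eSum K m i + eSum K m (i + (j + 1) * D)
        = (eSum K m i + eSum K m (i + j * D))
          + (eSum K m (i + j * D) + eSum K m (i + (j + 1) * D)) := by
      have hz := vec_add_self (eSum K m (i + j * D))
      calc eSum K m i + eSum K m (i + (j + 1) * D)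
          = eSum K m i + eSum K m (i + (j + 1) * D) + 0 := by rw [add_zero]
        _ = eSum K m i + eSum K m (i + (j + 1) * D)
              + (eSum K m (i + j * D) + eSum K m (i + j * D)) := by rw [hz]
        _ = (eSum K m i + eSum K m (i + j * D))
              + (eSum K m (i + j * D) + eSum K m (i + (j + 1) * D)) := by abel
    rw [key]
    exact Submodule.add_mem _ h1 h2

lemma pair_mem {K D m : ℕ} (hK : 0 < K) (hD : 0 < D) (hm : 0 < m)
    (hDK : D < K) (hdvd : D ∣ K) (r : ℕ) :
    eSum K m r + eSum K m (r + D) ∈ Submodule.span (ZMod 2) (codeSet K D m) := by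
  set q := K / D with hqdef
  have hqD : q * D = K := Nat.div_mul_cancel hdvd
  have hq2 : 2 ≤ q := by
    by_contra h
    push_neg at h
    interval_cases q <;> omega
  set s := r % K with hs
  have hsK : s < K := Nat.mod_lt _ hK
  obtain ⟨i, j, hi1, hi2, hj, hcong⟩ :
      ∃ i j : ℕ, 1 ≤ i ∧ i ≤ D ∧ j ≤ q - 1 ∧ s % K = (i + j * D) % K := by
    by_cases h0 : s % D = 0
    · rcases Nat.eq_zero_or_pos s with hs0 | hspos
      · refine ⟨D, q - 1, hD, le_refl D, le_refl _, ?_⟩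
        have hKeq : D + (q - 1) * D = K := by
          have h2 : q - 1 + 1 = q := by omega
          have : (q - 1) * D + D = q * D := by
            calc (q - 1) * D + D = (q - 1 + 1) * D := by ring
              _ = q * D := by rw [h2]
          omega
        rw [hs0, hKeq, Nat.mod_self, Nat.zero_mod]
      · have hsD : D ≤ s := by
          rcases Nat.lt_or_ge s D with h | h
          · rw [Nat.mod_eq_of_lt h] at h0; omega
          · exact h
        have hdiv1 : 1 ≤ s / D := (Nat.one_le_div_iff hD).2 hsD
        have hdivq : s / D < q := by
          apply Nat.div_lt_of_lt_mul
          rw [mul_comm] at hqD; omega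
        refine ⟨D, s / D - 1, hD, le_refl D, by omega, ?_⟩
        have h3 : s / D * D = s := Nat.div_mul_cancel (Nat.dvd_of_mod_eq_zero h0)
        have h2 : s / D - 1 + 1 = s / D := by omega
        have h1 : (s / D - 1) * D + D = s / D * D := by
          calc (s / D - 1) * D + D = (s / D - 1 + 1) * D := by ring
            _ = s / D * D := by rw [h2]
        have : D + (s / D - 1) * D = s := by omega
        rw [this]
    · have hdivq : s / D < q := by
        apply Nat.div_lt_of_lt_mul
        rw [mul_comm] at hqD; omega
      have h3 : s % D + s / D * D = s := Nat.mod_add_div' s D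
      refine ⟨s % D, s / D, by omega, le_of_lt (Nat.mod_lt _ hD), by omega, ?_⟩
      rw [h3]
  have hrs : r % K = s % K := by
    rw [hs, Nat.mod_mod_of_dvd _ dvd_rfl]
  have hrsD : (r + D) % K = (s + D) % K := Nat.ModEq.add_right D hrs
  have hEr : eSum K m r = eSum K m (i + j * D) :=
    (eSum_mod hK hm hrs).trans (eSum_mod hK hm hcong)
  have hErD : eSum K m (r + D) = eSum K m (i + (j + 1) * D) := by
    have h4 : (s + D) % K = (i + j * D + D) % K := Nat.ModEq.add_right D hcong
    have h5 : i + j * D + D = i + (j + 1) * D := by ring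
    rw [h5] at h4
    exact (eSum_mod hK hm hrsD).trans (eSum_mod hK hm h4)
  rw [hEr, hErD]
  rcases Nat.lt_or_ge (j + 1) q with hlt | hge
  · exact code_step hi1 hi2 (by omega)
  · have hjq : j = q - 1 := by omega
    have h6 : eSum K m (i + (j + 1) * D) = eSum K m i := by
      apply eSum_mod hK hm
      have : i + (j + 1) * D = i + K := by
        rw [hjq]
        have : q - 1 + 1 = q := by omega
        rw [this, hqD]
      rw [this, Nat.add_mod_right]
    rw [h6, add_comm]
    rw [hjq]
    exact tel hK hD hm (q - 1) (le_refl _) i hi1 hi2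

lemma valid_mem {K D m : ℕ} (hK : 0 < K) (hD : 0 < D) (hm : 0 < m)
    (hDK : D < K) (hdvd : D ∣ K) (k : ZMod (m * K)) :
    stdVec (m * K) k ∈ Submodule.span (ZMod 2)
      (codeSet K D m ∪ stdVec (m * K) ''
        ({x | ∃ i : ℕ, 1 ≤ i ∧ i ≤ m - 1 ∧ x = k + (i * K : ℕ)} ∪
         {x | ∃ i : ℕ, i ≤ m - 1 ∧ x = k + (D + i * K : ℕ)})) := by
  haveI : NeZero (m * K) := ⟨by positivity⟩
  set W := Submodule.span (ZMod 2)
      (codeSet K D m ∪ stdVec (m * K) ''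
        ({x | ∃ i : ℕ, 1 ≤ i ∧ i ≤ m - 1 ∧ x = k + (i * K : ℕ)} ∪
         {x | ∃ i : ℕ, i ≤ m - 1 ∧ x = k + (D + i * K : ℕ)})) with hW
  set kv := k.val with hkvdef
  have hkv : ((kv : ℕ) : ZMod (m * K)) = k := ZMod.natCast_zmod_val k
  have h1 : ∀ t : ℕ, 1 ≤ t → t ≤ m - 1 →
      stdVec (m * K) ((kv + t * K : ℕ)) ∈ W := by
    intro t ht1 ht2
    apply Submodule.subset_span
    right
    refine ⟨k + ((t * K : ℕ) : ZMod (m * K)), Or.inl ⟨t, ht1, ht2, rfl⟩, ?_⟩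
    congr 1
    push_cast [hkv]
    ring
  have h2 : ∀ t : ℕ, t ≤ m - 1 →
      stdVec (m * K) ((kv + D + t * K : ℕ)) ∈ W := by
    intro t ht
    apply Submodule.subset_span
    right
    refine ⟨k + ((D + t * K : ℕ) : ZMod (m * K)), Or.inr ⟨t, ht, rfl⟩, ?_⟩
    congr 1
    push_cast [hkv]
    ring
  have h3 : eSum K m (kv + D) ∈ W := by
    unfold eSum
    apply Submodule.sum_mem
    intro t ht
    rw [Finset.mem_range] at ht
    exact h2 t (by omega)
  have h4 : eSum K m kv + eSum K m (kv + D) ∈ W :=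
    Submodule.span_mono Set.subset_union_left (pair_mem hK hD hm hDK hdvd kv)
  have h5 : eSum K m kv ∈ W := by
    have heq : eSum K m kv = (eSum K m kv + eSum K m (kv + D)) + eSum K m (kv + D) := by
      rw [add_assoc, vec_add_self, add_zero]
    rw [heq]
    exact Submodule.add_mem _ h4 h3
  obtain ⟨m', rfl⟩ := Nat.exists_eq_succ_of_ne_zero hm.ne'
  have hsplit : eSum K (m' + 1) kv
      = (∑ t ∈ Finset.range m', stdVec ((m' + 1) * K) ((kv + (t + 1) * K : ℕ)))
        + stdVec ((m' + 1) * K) k := by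
    unfold eSum
    rw [Finset.sum_range_succ']
    congr 1
    rw [show kv + 0 * K = kv by ring, hkv]
  have hS : (∑ t ∈ Finset.range m', stdVec ((m' + 1) * K) ((kv + (t + 1) * K : ℕ))) ∈ W := by
    apply Submodule.sum_mem
    intro t ht
    rw [Finset.mem_range] at ht
    exact h1 (t + 1) (by omega) (by omega)
  have hfinal : stdVec ((m' + 1) * K) k
      = eSum K (m' + 1) kv
        + (∑ t ∈ Finset.range m', stdVec ((m' + 1) * K) ((kv + (t + 1) * K : ℕ))) := by
    rw [hsplit]
    set S := ∑ t ∈ Finset.range m', stdVec ((m' + 1) * K) ((kv + (t + 1) * K : ℕ))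
    calc stdVec ((m' + 1) * K) k = 0 + stdVec ((m' + 1) * K) k := by rw [zero_add]
      _ = (S + S) + stdVec ((m' + 1) * K) k := by rw [vec_add_self]
      _ = S + stdVec ((m' + 1) * K) k + S := by abel
  rw [hfinal]
  exact Submodule.add_mem _ h5 hS

lemma codeSet_eq {K D m : ℕ} (hK : 0 < K) (hD : 0 < D) (hm : 0 < m)
    (hDK : D < K) (hdvd : D ∣ K) :
    codeSet K D m = (fun a => eSum K m a + eSum K m (a + D)) '' Set.Icc 1 (K - D) := by
  have hqD : K / D * D = K := Nat.div_mul_cancel hdvd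
  have hq2 : 2 ≤ K / D := by
    by_contra h
    push_neg at h
    interval_cases h : K / D <;> omega
  set q := K / D with hqdef
  ext v
  constructor
  · rintro ⟨i, j, hi1, hi2, hj1, hj2, rfl⟩
    refine ⟨i + (j - 1) * D, ?_, ?_⟩
    · constructor
      · omega
      · have h1 : (j - 1) * D ≤ (q - 2) * D := Nat.mul_le_mul_right D (by omega)
        have h2 : (q - 2) * D + D + D = q * D := by
          have : q - 2 + 2 = q := by omega
          calc (q - 2) * D + D + D = (q - 2 + 2) * D := by ring
            _ = q * D := by rw [this]
        omega
    · have : i + (j - 1) * D + D = i + j * D := by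
        have h3 : j - 1 + 1 = j := by omega
        calc i + (j - 1) * D + D = i + (j - 1 + 1) * D := by ring
          _ = i + j * D := by rw [h3]
      dsimp only
      rw [this]
  · rintro ⟨a, ⟨ha1, ha2⟩, rfl⟩
    have hmlt : (a - 1) % D < D := Nat.mod_lt _ hD
    refine ⟨(a - 1) % D + 1, (a - 1) / D + 1, by omega,
      Nat.succ_le_of_lt hmlt, Nat.succ_le_succ (Nat.zero_le _), ?_, ?_⟩
    · have : (a - 1) / D < q - 1 := by
        rw [Nat.div_lt_iff_lt_mul hD]
        have h2 : (q - 1) * D + D = q * D := by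
          have : q - 1 + 1 = q := by omega
          calc (q - 1) * D + D = (q - 1 + 1) * D := by ring
            _ = q * D := by rw [this]
        omega
      omega
    · have key : (a - 1) % D + 1 + ((a - 1) / D + 1 - 1) * D = a := by
        simp only [Nat.add_sub_cancel]
        have := Nat.mod_add_div' (a - 1) D
        omega
      have key2 : (a - 1) % D + 1 + ((a - 1) / D + 1) * D = a + D := by
        have h3 : ((a - 1) / D + 1) * D = ((a - 1) / D) * D + D := by ring
        have := Nat.mod_add_div' (a - 1) D
        omega
      rw [key, key2]

lemma code_injOn {K D m : ℕ} (hK : 0 < K) (hD : 0 < D) (hm : 0 < m)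
    (hDK : D < K) (hdvd : D ∣ K) :
    Set.InjOn (fun a => eSum K m a + eSum K m (a + D)) (Set.Icc 1 (K - D)) := by
  have hKm : K ≤ m * K := Nat.le_mul_of_pos_left K hm
  have heval : ∀ c ∈ Set.Icc 1 (K - D), ∀ x ∈ Set.Icc 1 (K - D),
      (eSum K m c + eSum K m (c + D)) ((x : ℕ) : ZMod (m * K))
        = (if x = c then 1 else 0) + (if x = (c + D) % K then (1 : ZMod 2) else 0) := by
    rintro c ⟨hc1, hc2⟩ x ⟨hx1, hx2⟩
    have hcK : c < K := by omega
    have hxK : x < m * K := by omega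
    have hmod : (c + D) % K % K = (c + D) % K := Nat.mod_mod_of_dvd _ dvd_rfl
    have h2 : eSum K m (c + D) = eSum K m ((c + D) % K) := eSum_mod (by omega) hm hmod.symm
    rw [Pi.add_apply, h2, eSum_apply hm hcK hxK, eSum_apply hm (Nat.mod_lt _ (by omega)) hxK,
      Nat.mod_eq_of_lt (by omega : x < K)]
  intro a ha b hb hfeq
  by_contra hne
  have hself : ∀ c ∈ Set.Icc 1 (K - D), c ≠ (c + D) % K := by
    rintro c ⟨hc1, hc2⟩
    rcases Nat.lt_or_ge (c + D) K with h | h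
    · rw [Nat.mod_eq_of_lt h]; omega
    · have : c + D = K := by omega
      rw [this, Nat.mod_self]; omega
  have h1 : (1 : ZMod 2) + 0 = (if a = b then 1 else 0) + (if a = (b + D) % K then (1 : ZMod 2) else 0) := by
    have := congrFun hfeq ((a : ℕ) : ZMod (m * K))
    dsimp only at this
    rw [heval a ha a ha, heval b hb a ha] at this
    rw [← this, if_pos rfl, if_neg (hself a ha)]
  have h2 : (1 : ZMod 2) + 0 = (if b = a then 1 else 0) + (if b = (a + D) % K then (1 : ZMod 2) else 0) := by
    have := congrFun hfeq ((b : ℕ) : ZMod (m * K))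
    dsimp only at this
    rw [heval a ha b hb, heval b hb b hb] at this
    rw [this, if_pos rfl, if_neg (hself b hb)]
  rw [if_neg hne, zero_add, add_zero] at h1
  rw [if_neg (Ne.symm hne), zero_add, add_zero] at h2
  have ha' : a = (b + D) % K := by
    by_contra h
    rw [if_neg h] at h1
    exact one_ne_zero h1
  have hb' : b = (a + D) % K := by
    by_contra h
    rw [if_neg h] at h2
    exact one_ne_zero h2
  obtain ⟨ha1, ha2⟩ := ha
  obtain ⟨hb1, hb2⟩ := hb
  have hbD : b + D ≤ K := by omega
  have haD : a + D ≤ K := by omega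
  rcases Nat.lt_or_ge (b + D) K with h | h
  · rw [Nat.mod_eq_of_lt h] at ha'
    rcases Nat.lt_or_ge (a + D) K with h' | h'
    · rw [Nat.mod_eq_of_lt h'] at hb'; omega
    · have : a + D = K := by omega
      rw [this, Nat.mod_self] at hb'; omega
  · have : b + D = K := by omega
    rw [this, Nat.mod_self] at ha'; omega

lemma codeSet_ncard {K D m : ℕ} (hK : 0 < K) (hD : 0 < D) (hm : 0 < m)
    (hDK : D < K) (hdvd : D ∣ K) : (codeSet K D m).ncard = K - D := by
  rw [codeSet_eq hK hD hm hDK hdvd,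
    Set.ncard_image_of_injOn (code_injOn hK hD hm hDK hdvd)]
  rw [← Finset.coe_Icc, Set.ncard_coe_finset, Nat.card_Icc]
  omega

lemma codeSet_finite {K D m : ℕ} (hK : 0 < K) (hD : 0 < D) (hm : 0 < m)
    (hDK : D < K) (hdvd : D ∣ K) : (codeSet K D m).Finite := by
  rw [codeSet_eq hK hD hm hDK hdvd]
  exact (Set.finite_Icc _ _).image _

lemma lower_bound {K D m : ℕ} (hK : 0 < K) (hD : 0 < D) (hm : 0 < m)
    (hDK : D < K) (hdvd : D ∣ K) (C' : Set (ZMod (m * K) → ZMod 2))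
    (hC : IsIndexCode (m * K)
      (fun k => {x | ∃ i : ℕ, 1 ≤ i ∧ i ≤ m - 1 ∧ x = k + (i * K : ℕ)} ∪
        {x | ∃ i : ℕ, i ≤ m - 1 ∧ x = k + (D + i * K : ℕ)}) C') :
    K - D ≤ C'.ncard := by
  classical
  set d := K - D with hd
  have hdpos : 0 < d := by omega
  have hdK : d < K := by omega
  have hKm : K ≤ m * K := Nat.le_mul_of_pos_left K hm
  set Tset : Set (ZMod (m * K)) := {x | ∀ i : ℕ, i < d → x ≠ ((i : ℕ) : ZMod (m * K))}
    with hTset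
  set T : Set (ZMod (m * K) → ZMod 2) := stdVec (m * K) '' Tset with hT
  -- the key downward induction
  have key : ∀ r k : ℕ, d ≤ k + r → k < d →
      stdVec (m * K) ((k : ℕ) : ZMod (m * K)) ∈ Submodule.span (ZMod 2) (C' ∪ T) := by
    intro r
    induction r with
    | zero => intro k h1 h2; omega
    | succ r ih =>
      intro k hkr hk
      have hmem := hC.2 ((k : ℕ) : ZMod (m * K))
      refine Submodule.span_le.2 ?_ hmem
      rintro v (hv | ⟨x, hx, rfl⟩)
      · exact Submodule.subset_span (Or.inl hv)
      · simp only [Set.mem_union, Set.mem_setOf_eq] at hx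
        rcases hx with ⟨i, hi1, hi2, rfl⟩ | ⟨i, hi, rfl⟩
        · -- x = k + i*K with 1 ≤ i ≤ m-1 : in Tset
          apply Submodule.subset_span
          right
          refine ⟨_, ?_, rfl⟩
          intro i' hi' heq
          have hiK : K ≤ i * K := Nat.le_mul_of_pos_left K (by omega)
          have hiK2 : i * K ≤ (m - 1) * K := Nat.mul_le_mul_right K hi2
          have hmK : (m - 1) * K + K = m * K := by
            have h5 : m - 1 + 1 = m := by omega
            calc (m - 1) * K + K = (m - 1 + 1) * K := by ring
              _ = m * K := by rw [h5]
          have hcast : ((k + i * K : ℕ) : ZMod (m * K)) = ((i' : ℕ) : ZMod (m * K)) := by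
            push_cast
            push_cast at heq
            exact heq
          have := (cast_inj_of_lt (by omega) (by omega)).1 hcast
          omega
        · -- x = k + (D + i*K)
          by_cases hcase : i = 0 ∧ k + D < d
          · obtain ⟨rfl, hkD⟩ := hcase
            have hx2 : (k : ZMod (m * K)) + ((D + 0 * K : ℕ) : ZMod (m * K))
                = (((k + D : ℕ) : ℕ) : ZMod (m * K)) := by push_cast; ring
            rw [hx2]
            exact ih (k + D) (by omega) hkD
          · apply Submodule.subset_span
            right
            refine ⟨_, ?_, rfl⟩
            intro i' hi' heq
            have hiK2 : i * K ≤ (m - 1) * K := Nat.mul_le_mul_right K hi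
            have hmK : (m - 1) * K + K = m * K := by
              have h5 : m - 1 + 1 = m := by omega
              calc (m - 1) * K + K = (m - 1 + 1) * K := by ring
                _ = m * K := by rw [h5]
            have hcast : ((k + (D + i * K) : ℕ) : ZMod (m * K)) = ((i' : ℕ) : ZMod (m * K)) := by
              push_cast
              push_cast at heq
              linear_combination heq
            have heq2 := (cast_inj_of_lt (by omega) (by omega)).1 hcast
            rcases Nat.eq_zero_or_pos i with rfl | hipos
            · simp at heq2
              omega
            · have hiK : K ≤ i * K := Nat.le_mul_of_pos_left K hipos
              omega
  have keyall : ∀ k : ℕ, k < d →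
      stdVec (m * K) ((k : ℕ) : ZMod (m * K)) ∈ Submodule.span (ZMod 2) (C' ∪ T) :=
    fun k hk => key d k (by omega) hk
  -- projection to coordinates 0..d-1
  set b : Fin d → ZMod (m * K) := fun i => (((i : ℕ) : ℕ) : ZMod (m * K)) with hb
  set π : (ZMod (m * K) → ZMod 2) →ₗ[ZMod 2] (Fin d → ZMod 2) :=
    LinearMap.funLeft (ZMod 2) (ZMod 2) b with hπ
  have hπT : ∀ v ∈ T, π v = 0 := by
    rintro v ⟨x, hx, rfl⟩
    funext i
    show stdVec (m * K) x (b i) = 0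
    unfold stdVec
    rw [if_neg]
    exact fun h => hx (i : ℕ) i.isLt h.symm
  have hπe : ∀ (k : ℕ) (hk : k < d), π (stdVec (m * K) ((k : ℕ) : ZMod (m * K)))
      = fun j => if (⟨k, hk⟩ : Fin d) = j then 1 else 0 := by
    intro k hk
    funext i
    show stdVec (m * K) ((k : ℕ) : ZMod (m * K)) (b i) = _
    unfold stdVec
    have hiff : (((i : ℕ) : ℕ) : ZMod (m * K)) = ((k : ℕ) : ZMod (m * K)) ↔ (i : ℕ) = k :=
      cast_inj_of_lt (by omega) (by omega)
    by_cases h : (i : ℕ) = k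
    · rw [if_pos (hiff.2 h), if_pos (by exact Fin.ext h.symm)]
    · rw [if_neg (fun hh => h (hiff.1 hh)), if_neg (fun hh => h (Fin.ext_iff.1 hh).symm)]
  have hspan : Submodule.span (ZMod 2) (π '' C') = ⊤ := by
    rw [eq_top_iff]
    intro x _
    rw [pi_eq_sum_univ x]
    apply Submodule.sum_mem
    intro i _
    apply Submodule.smul_mem
    have hstd := keyall (i : ℕ) i.isLt
    have h1 : π (stdVec (m * K) (((i : ℕ) : ℕ) : ZMod (m * K)))
        ∈ Submodule.map π (Submodule.span (ZMod 2) (C' ∪ T)) :=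
      Submodule.mem_map_of_mem hstd
    rw [Submodule.map_span] at h1
    have h2 : π '' (C' ∪ T) ⊆ ↑(Submodule.span (ZMod 2) (π '' C')) := by
      rintro v ⟨w, hw | hw, rfl⟩
      · exact Submodule.subset_span ⟨w, hw, rfl⟩
      · rw [hπT w hw]
        exact Submodule.zero_mem _
    have h3 := Submodule.span_le.2 h2 h1
    have h4 := hπe (i : ℕ) i.isLt
    rw [h4] at h3
    convert h3 using 2
  -- conclude
  have hfin : C'.Finite := hC.1
  have hfinim : (π '' C').Finite := hfin.image π
  haveI := hfinim.fintype
  have h5 : Module.finrank (ZMod 2) (Submodule.span (ZMod 2) (π '' C'))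
      ≤ (π '' C').toFinset.card := finrank_span_le_card _
  rw [hspan, finrank_top, Module.finrank_fin_fun] at h5
  have h6 : (π '' C').toFinset.card = (π '' C').ncard :=
    (Set.ncard_eq_toFinset_card' _).symm
  have h7 : (π '' C').ncard ≤ C'.ncard := Set.ncard_image_le hfin
  omega

/-- **Lifting Corollary 1 / Case I.** For `D ∣ K`, `D < K`, the lifted code
`{e'_{i+(j-1)D} + e'_{i+jD}}` is a valid scalar linear index code of optimal length
`K - D` for the lift of the problem with antidotes `{k + D}`. -/
theorem lifted_code_caseI (K D m : ℕ) (hK : 0 < K) (hD : 0 < D) (hm : 0 < m)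
    (hDK : D < K) (hdvd : D ∣ K) :
    (IsIndexCode (m * K)
        (fun k => {x | ∃ i : ℕ, 1 ≤ i ∧ i ≤ m - 1 ∧ x = k + (i * K : ℕ)} ∪
          {x | ∃ i : ℕ, i ≤ m - 1 ∧ x = k + (D + i * K : ℕ)})
        {v | ∃ i j : ℕ, 1 ≤ i ∧ i ≤ D ∧ 1 ≤ j ∧ j ≤ K / D - 1 ∧
          v = eSum K m (i + (j - 1) * D) + eSum K m (i + j * D)} ∧
      ({v | ∃ i j : ℕ, 1 ≤ i ∧ i ≤ D ∧ 1 ≤ j ∧ j ≤ K / D - 1 ∧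
          v = eSum K m (i + (j - 1) * D) + eSum K m (i + j * D)} :
        Set (ZMod (m * K) → ZMod 2)).ncard = K - D) ∧
    (∀ C' : Set (ZMod (m * K) → ZMod 2),
      IsIndexCode (m * K)
        (fun k => {x | ∃ i : ℕ, 1 ≤ i ∧ i ≤ m - 1 ∧ x = k + (i * K : ℕ)} ∪
          {x | ∃ i : ℕ, i ≤ m - 1 ∧ x = k + (D + i * K : ℕ)}) C' →
        K - D ≤ C'.ncard) := by
  refine ⟨⟨⟨codeSet_finite hK hD hm hDK hdvd, fun k => valid_mem hK hD hm hDK hdvd k⟩,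
    codeSet_ncard hK hD hm hDK hdvd⟩, fun C' hC' => lower_bound hK hD hm hDK hdvd C' hC'⟩
end

section
/- Let K, D, λ, m be positive integers with D < K, λ dividing K − D, and K − D dividing K − λ; set r = K − D and q = (K − λ)/(K − D). Consider the index coding problem with mK messages and antidotes A'_k = {k + iK : 1 ≤ i ≤ m−1} ∪ {k + j + iK : 1 ≤ j ≤ D, 0 ≤ i ≤ m−1} ⊆ ZMod (mK) for each k ∈ ZMod (mK). Then the set C^(m) = { Σ_{v=0}^{q−1} e'_{i+vr} + e'_{qr+1+((i−1) mod λ)} : 1 ≤ i ≤ r }, where e'_l = Σ_{t=0}^{m−1} e_{l+tK} ∈ V_{mK}, is a valid scalar linear index code of length r = K − D for this problem, and moreover every valid scalar linear index code for this problem has length at least K − D. -/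
/-- The lift of the one-sided consecutive antidote pattern with parameter `D`:
`A'_k = {k + iK : 1 ≤ i ≤ m-1} ∪ {k + j + iK : 1 ≤ j ≤ D, 0 ≤ i ≤ m-1}`. -/
def consecLiftedA (K D m : ℕ) (k : ZMod (m * K)) : Set (ZMod (m * K)) :=
  {x | ∃ i : ℕ, 1 ≤ i ∧ i ≤ m - 1 ∧ x = k + (i * K : ℕ)} ∪
  {x | ∃ j i : ℕ, 1 ≤ j ∧ j ≤ D ∧ i ≤ m - 1 ∧ x = k + (j + i * K : ℕ)}

namespace LiftedVI

def codeSet (K D lam m : ℕ) : Set (ZMod (m * K) → ZMod 2) :=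
  {v | ∃ i : ℕ, 1 ≤ i ∧ i ≤ K - D ∧
    v = (∑ w ∈ Finset.range ((K - lam) / (K - D)), eSum K m (i + w * (K - D))) +
      eSum K m (((K - lam) / (K - D)) * (K - D) + 1 + ((i - 1) % lam))}

variable {K D lam m : ℕ}

lemma stdVec_injective (n : ℕ) [NeZero n] : Function.Injective (stdVec n) := by
  intro x y h
  have hx := congrFun h x
  simp only [stdVec, if_pos rfl] at hx
  by_contra hne
  rw [if_neg hne] at hx
  exact one_ne_zero hx

lemma addSelf {n : ℕ} (v : ZMod n → ZMod 2) : v + v = 0 := by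
  funext p
  have : ∀ x : ZMod 2, x + x = 0 := by decide
  exact this (v p)

lemma stdVec_decomp {n : ℕ} [NeZero n] (v : ZMod n → ZMod 2) :
    v = ∑ j : ZMod n, v j • stdVec n j := by
  funext p
  rw [Finset.sum_apply]
  have key : ∀ j : ZMod n, (v j • stdVec n j) p = if p = j then v j else 0 := by
    intro j
    by_cases h : p = j <;> simp [stdVec, h]
  rw [Finset.sum_congr rfl (fun j _ => key j), Finset.sum_ite_eq]
  simp

lemma eSum_add_K (l : ℕ) : eSum K m (l + K) = eSum K m l := by
  unfold eSum
  set f : ℕ → (ZMod (m*K) → ZMod 2) := fun t => stdVec (m*K) ((l + t * K : ℕ)) with hf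
  have key : ∀ t ∈ Finset.range m, stdVec (m*K) ((l + K + t * K : ℕ)) = f (t+1) := by
    intro t _
    simp only [hf]
    congr 1
    push_cast; ring
  rw [Finset.sum_congr rfl key]
  have hfm : f m = f 0 := by
    simp only [hf]
    have h0 : ((l + m * K : ℕ) : ZMod (m*K)) = ((l + 0 * K : ℕ) : ZMod (m*K)) := by
      push_cast
      rw [show ((m : ZMod (m*K))) * (K : ZMod (m*K)) = ((m*K : ℕ) : ZMod (m*K)) by push_cast; ring,
        ZMod.natCast_self]
      ring
    rw [h0]
  have e1 : (∑ x ∈ Finset.range m, f (x+1)) + f 0 = (∑ x ∈ Finset.range m, f x) + f m := by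
    rw [← Finset.sum_range_succ', Finset.sum_range_succ]
  rw [hfm] at e1
  exact add_right_cancel e1

lemma eSum_add_mul_K (l c : ℕ) : eSum K m (l + c * K) = eSum K m l := by
  induction c with
  | zero => simp
  | succ c ih => rw [show l + (c+1)*K = (l + c*K) + K by ring, eSum_add_K, ih]

lemma eSum_mod (l : ℕ) : eSum K m l = eSum K m (l % K) := by
  conv_lhs => rw [← Nat.mod_add_div' l K]
  rw [eSum_add_mul_K]

lemma eSum_congr {l₁ l₂ : ℕ} (h : l₁ % K = l₂ % K) : eSum K m l₁ = eSum K m l₂ := by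
  rw [eSum_mod, h, ← eSum_mod]

lemma eSum_apply (hK : 0 < K) (hm : 0 < m) (l : ℕ) (p : ZMod (m * K)) :
    eSum K m l p = if p.val % K = l % K then 1 else 0 := by
  have hn : 0 < m * K := Nat.mul_pos hm hK
  haveI : NeZero (m * K) := ⟨by omega⟩
  rw [eSum_mod]
  set l' := l % K with hl'
  have hl'K : l' < K := Nat.mod_lt _ hK
  have hll : l' % K = l' := Nat.mod_eq_of_lt hl'K
  have hpv : p.val < m * K := ZMod.val_lt p
  have ht0 : p.val / K < m := by
    rw [Nat.div_lt_iff_lt_mul hK]; omega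
  unfold eSum stdVec
  rw [Finset.sum_apply]
  have step : ∀ t ∈ Finset.range m,
      (if p = ((l' + t * K : ℕ) : ZMod (m*K)) then (1 : ZMod 2) else 0)
        = if t = p.val / K then (if p.val % K = l' then 1 else 0) else 0 := by
    intro t ht
    rw [Finset.mem_range] at ht
    have hlt : l' + t * K < m * K := by
      calc l' + t * K < K + t * K := by omega
        _ = (t+1) * K := by ring
        _ ≤ m * K := Nat.mul_le_mul_right K (by omega)
    have hiff : p = ((l' + t * K : ℕ) : ZMod (m*K)) ↔ p.val = l' + t * K := by
      constructor
      · intro h; rw [h, ZMod.val_cast_of_lt hlt]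
      · intro h; rw [← h, ZMod.natCast_val, ZMod.cast_id]
    by_cases hc : p.val = l' + t * K
    · have h1 : p.val % K = l' := by rw [hc, Nat.add_mul_mod_self_right, hll]
      have h2 : t = p.val / K := by
        rw [hc, Nat.add_mul_div_right _ _ hK, Nat.div_eq_of_lt hl'K]; omega
      rw [if_pos (hiff.mpr hc), if_pos h2, if_pos h1]
    · rw [if_neg (fun h => hc (hiff.mp h))]
      by_cases h1 : t = p.val / K
      · rw [if_pos h1]
        by_cases h2 : p.val % K = l'
        · exact absurd (by rw [h1, ← h2]; exact (Nat.mod_add_div' p.val K).symm) hc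
        · rw [if_neg h2]
      · rw [if_neg h1]
  rw [Finset.sum_congr rfl step, Finset.sum_ite_eq' (Finset.range m) (p.val / K)]
  rw [if_pos (Finset.mem_range.mpr ht0)]

lemma eSum_val_decomp (hK : 0 < K) (hm : 0 < m) (k : ZMod (m*K)) :
    eSum K m k.val = stdVec (m*K) k
      + ∑ t ∈ Finset.range (m-1), stdVec (m*K) (k + (((t+1) * K : ℕ) : ZMod (m*K))) := by
  haveI : NeZero (m * K) := ⟨by positivity⟩
  have hcast : ∀ t : ℕ, ((k.val + t * K : ℕ) : ZMod (m*K)) = k + ((t * K : ℕ) : ZMod (m*K)) := by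
    intro t; push_cast; rw [ZMod.natCast_val, ZMod.cast_id]
  obtain ⟨m', hm'⟩ : ∃ m', m = m' + 1 := ⟨m - 1, by omega⟩
  subst hm'
  unfold eSum
  rw [Finset.sum_range_succ']
  have h0 : ((k.val + 0 * K : ℕ) : ZMod ((m'+1)*K)) = k := by
    rw [show k.val + 0 * K = k.val from by omega, ZMod.natCast_val, ZMod.cast_id]
  have hsum : ∑ t ∈ Finset.range m', stdVec ((m'+1)*K) ((k.val + (t+1) * K : ℕ))
      = ∑ t ∈ Finset.range m', stdVec ((m'+1)*K) (k + (((t+1) * K : ℕ) : ZMod ((m'+1)*K))) :=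
    Finset.sum_congr rfl fun t _ => by rw [hcast]
  rw [hsum, h0]
  simp only [Nat.add_sub_cancel]
  exact add_comm _ _

lemma antidote_mem (hK : 0 < K) (hm : 0 < m) (k : ZMod (m*K)) {j : ℕ} (hj1 : 1 ≤ j) (hjD : j ≤ D) :
    eSum K m (k.val + j)
      ∈ Submodule.span (ZMod 2) (stdVec (m*K) '' consecLiftedA K D m k) := by
  haveI : NeZero (m * K) := ⟨by positivity⟩
  unfold eSum
  apply Submodule.sum_mem
  intro t ht
  rw [Finset.mem_range] at ht
  apply Submodule.subset_span
  refine ⟨k + ((j + t * K : ℕ) : ZMod (m*K)), Or.inr ⟨j, t, hj1, hjD, by omega, rfl⟩, ?_⟩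
  congr 1
  push_cast
  rw [ZMod.natCast_val, ZMod.cast_id]
  ring

lemma decode (hK : 0 < K) (hD : 0 < D) (hlam : 0 < lam) (hm : 0 < m) (hDK : D < K)
    (hdvd1 : lam ∣ (K - D)) (hdvd2 : (K - D) ∣ (K - lam)) (k : ZMod (m * K)) :
    stdVec (m*K) k ∈ Submodule.span (ZMod 2)
      (codeSet K D lam m ∪ stdVec (m*K) '' consecLiftedA K D m k) := by
  haveI : NeZero (m * K) := ⟨by positivity⟩
  set r := K - D with hr
  set q := (K - lam) / (K - D) with hq
  have hrpos : 0 < r := by omega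
  have hqr : q * r = K - lam := Nat.div_mul_cancel hdvd2
  have hlamr : lam ≤ r := Nat.le_of_dvd hrpos hdvd1
  have hq1 : 1 ≤ q := by
    rcases Nat.eq_zero_or_pos q with h | h
    · exfalso; rw [h] at hqr; omega
    · exact h
  have hrqr : r ≤ q * r := by
    calc r = 1 * r := (one_mul r).symm
      _ ≤ q * r := Nat.mul_le_mul_right r hq1
  have hlamD : lam ≤ D := by omega
  set S := codeSet K D lam m ∪ stdVec (m*K) '' consecLiftedA K D m k with hS
  have hsubA : Submodule.span (ZMod 2) (stdVec (m*K) '' consecLiftedA K D m k)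
      ≤ Submodule.span (ZMod 2) S := Submodule.span_mono Set.subset_union_right
  -- step 1: reduce to eSum of k.val
  suffices hFa : eSum K m k.val ∈ Submodule.span (ZMod 2) S by
    have hdec := eSum_val_decomp (K := K) hK hm k
    have heq1 : stdVec (m*K) k = eSum K m k.val
        - ∑ t ∈ Finset.range (m-1), stdVec (m*K) (k + (((t+1) * K : ℕ) : ZMod (m*K))) := by
      rw [hdec]; ring
    rw [heq1]
    refine Submodule.sub_mem _ hFa (Submodule.sum_mem _ fun t ht => ?_)
    rw [Finset.mem_range] at ht
    exact hsubA (Submodule.subset_span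
      ⟨k + (((t+1) * K : ℕ) : ZMod (m*K)), Or.inl ⟨t+1, by omega, by omega, rfl⟩, rfl⟩)
  -- normalized receiver residue b'
  obtain ⟨b', hbmod, hb'1, hb'K⟩ :
      ∃ b', k.val % K = b' % K ∧ 1 ≤ b' ∧ b' ≤ K := by
    rcases Nat.eq_zero_or_pos (k.val % K) with h | h
    · exact ⟨K, by rw [h, Nat.mod_self], by omega, le_refl K⟩
    · exact ⟨k.val % K, (Nat.mod_mod_of_dvd k.val dvd_rfl).symm, h,
        le_of_lt (Nat.mod_lt _ hK)⟩
  rw [show eSum K m k.val = eSum K m b' from eSum_congr hbmod]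
  -- antidote access
  have hFj : ∀ j : ℕ, 1 ≤ j → j ≤ D → eSum K m (b' + j) ∈ Submodule.span (ZMod 2) S := by
    intro j h1 h2
    have hcg : eSum K m (b' + j) = eSum K m (k.val + j) :=
      eSum_congr (by rw [Nat.add_mod, ← hbmod, ← Nat.add_mod])
    rw [hcg]
    exact hsubA (antidote_mem hK hm k h1 h2)
  -- code vectors
  have hCmem : ∀ i : ℕ, 1 ≤ i → i ≤ r →
      ((∑ w ∈ Finset.range q, eSum K m (i + w * r)) + eSum K m (q * r + 1 + ((i-1) % lam)))
        ∈ Submodule.span (ZMod 2) S := fun i h1 h2 =>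
    Submodule.subset_span (Or.inl ⟨i, h1, h2, rfl⟩)
  rcases le_or_gt b' (q * r) with hcase | hcase
  · -- body case
    have hdm : r * ((b'-1) / r) + (b'-1) % r = b' - 1 := Nat.div_add_mod (b'-1) r
    set v₀ := (b'-1) / r with hv₀
    set i := (b'-1) % r + 1 with hi
    have hilt : (b'-1) % r < r := Nat.mod_lt _ hrpos
    have hb'i : b' = i + v₀ * r := by rw [hi, mul_comm]; omega
    have hv₀q : v₀ < q := by
      by_contra h
      push_neg at h
      have := Nat.mul_le_mul_right r h
      omega
    have hv₀r : v₀ * r + r ≤ q * r := by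
      have h2 := Nat.mul_le_mul_right r (show v₀ + 1 ≤ q by omega)
      rw [Nat.succ_mul] at h2
      exact h2
    have hi1 : 1 ≤ i := by omega
    have hir : i ≤ r := by omega
    have hdml : lam * ((i-1) / lam) + (i-1) % lam = i - 1 := Nat.div_add_mod (i-1) lam
    have hsl : (i-1) % lam < lam := Nat.mod_lt _ hlam
    rcases le_or_gt r (lam * ((i-1) / lam) + lam + v₀ * r) with hcond | hcond
    · -- B1 : single code vector suffices
      have hvmem : v₀ ∈ Finset.range q := Finset.mem_range.mpr hv₀q
      have hsplit : (∑ w ∈ Finset.range q, eSum K m (i + w * r))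
          = eSum K m (i + v₀ * r) + ∑ w ∈ (Finset.range q).erase v₀, eSum K m (i + w * r) :=
        (Finset.add_sum_erase _ _ hvmem).symm
      have hEq : eSum K m b'
          = ((∑ w ∈ Finset.range q, eSum K m (i + w * r))
              + eSum K m (q * r + 1 + ((i-1) % lam)))
            - (∑ w ∈ (Finset.range q).erase v₀, eSum K m (i + w * r))
            - eSum K m (q * r + 1 + ((i-1) % lam)) := by
        rw [hsplit, ← hb'i]; ring
      rw [hEq]
      refine Submodule.sub_mem _ (Submodule.sub_mem _ (hCmem i hi1 hir) ?_) ?_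
      · -- remaining body terms
        refine Submodule.sum_mem _ fun v hv => ?_
        rw [Finset.mem_erase, Finset.mem_range] at hv
        have hvr : v * r + r ≤ q * r := by
          have h2 := Nat.mul_le_mul_right r (show v + 1 ≤ q from hv.2)
          rw [Nat.succ_mul] at h2
          exact h2
        rcases Nat.lt_or_ge v₀ v with hvv | hvv
        · -- v > v₀ : offset (v - v₀) * r , no wraparound
          have hmul := Nat.mul_le_mul_right r (show v₀ + 1 ≤ v from hvv)
          rw [Nat.succ_mul] at hmul
          rw [show i + v * r = b' + (v * r - v₀ * r) from by omega]
          exact hFj _ (by omega) (by omega)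
        · -- v < v₀ : wraparound
          have hvlt : v < v₀ := by omega
          have hmul := Nat.mul_le_mul_right r (show v + 1 ≤ v₀ from hvlt)
          rw [Nat.succ_mul] at hmul
          have hKeq : b' + (K - v₀ * r + v * r) = (i + v * r) + K := by omega
          rw [show eSum K m (i + v * r) = eSum K m (b' + (K - v₀ * r + v * r)) from by
            rw [hKeq, eSum_add_K]]
          exact hFj _ (by omega) (by omega)
      · -- tail term
        rw [show q * r + 1 + ((i-1) % lam) = b' + (q * r + 1 + ((i-1) % lam) - b') from by omega]
        exact hFj _ (by omega) (by omega)
    · -- B2 : two code vectors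
      have hv₀0 : v₀ * r = 0 := by
        rcases Nat.eq_zero_or_pos v₀ with h | h
        · rw [h]; ring
        · exfalso
          have h2 := Nat.mul_le_mul_right r (show 1 ≤ v₀ from h)
          rw [one_mul] at h2
          omega
      have hb'i' : b' = i := by omega
      have hdvdc : lam ∣ r - (lam * ((i-1) / lam) + lam) :=
        Nat.dvd_sub hdvd1 (Dvd.dvd.add (dvd_mul_right lam _) dvd_rfl)
      have hlr2 : lam ≤ r - (lam * ((i-1) / lam) + lam) :=
        Nat.le_of_dvd (by omega) hdvdc
      have hilam : i + lam ≤ r := by omega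
      have htl : (i + lam - 1) % lam = (i - 1) % lam := by
        rw [show i + lam - 1 = (i - 1) + lam from by omega, Nat.add_mod_right]
      have h0mem : (0 : ℕ) ∈ Finset.range q := Finset.mem_range.mpr (by omega)
      have hsplit : (∑ w ∈ Finset.range q, eSum K m (i + w * r))
          = eSum K m (i + 0 * r) + ∑ w ∈ (Finset.range q).erase 0, eSum K m (i + w * r) :=
        (Finset.add_sum_erase _ _ h0mem).symm
      have hi0 : i + 0 * r = i := by omega
      rw [hi0] at hsplit
      have hT2 : eSum K m (q * r + 1 + ((i-1) % lam)) + eSum K m (q * r + 1 + ((i-1) % lam))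
          = 0 := addSelf _
      have hEq : eSum K m b'
          = (((∑ w ∈ Finset.range q, eSum K m (i + w * r))
                + eSum K m (q * r + 1 + ((i-1) % lam)))
              + ((∑ w ∈ Finset.range q, eSum K m ((i + lam) + w * r))
                + eSum K m (q * r + 1 + (((i + lam)-1) % lam))))
            - (∑ w ∈ (Finset.range q).erase 0, eSum K m (i + w * r))
            - (∑ w ∈ Finset.range q, eSum K m ((i + lam) + w * r)) := by
        rw [htl, hsplit, hb'i']
        linear_combination -hT2
      rw [hEq]
      refine Submodule.sub_mem _ (Submodule.sub_mem _
        (Submodule.add_mem _ (hCmem i hi1 hir) (hCmem (i + lam) (by omega) hilam)) ?_) ?_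
      · refine Submodule.sum_mem _ fun v hv => ?_
        rw [Finset.mem_erase, Finset.mem_range] at hv
        have hvr : v * r + r ≤ q * r := by
          have h2 := Nat.mul_le_mul_right r (show v + 1 ≤ q from hv.2)
          rw [Nat.succ_mul] at h2
          exact h2
        have hv1 : 1 ≤ v := by omega
        have hmul := Nat.mul_le_mul_right r (show 1 ≤ v from hv1)
        rw [one_mul] at hmul
        rw [show i + v * r = b' + (v * r) from by omega]
        exact hFj _ (by omega) (by omega)
      · refine Submodule.sum_mem _ fun v hv => ?_
        rw [Finset.mem_range] at hv
        have hvr : v * r + r ≤ q * r := by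
          have h2 := Nat.mul_le_mul_right r (show v + 1 ≤ q from hv)
          rw [Nat.succ_mul] at h2
          exact h2
        rw [show (i + lam) + v * r = b' + (lam + v * r) from by omega]
        exact hFj _ (by omega) (by omega)
  · -- tail case
    set i := b' - q * r with hi
    have hi1 : 1 ≤ i := by omega
    have hilam : i ≤ lam := by omega
    have hmod : (i - 1) % lam = i - 1 := Nat.mod_eq_of_lt (by omega)
    have hEq : eSum K m b'
        = ((∑ w ∈ Finset.range q, eSum K m (i + w * r))
            + eSum K m (q * r + 1 + ((i-1) % lam)))
          - (∑ w ∈ Finset.range q, eSum K m (i + w * r)) := by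
      rw [hmod, show q * r + 1 + (i - 1) = b' from by omega]
      ring
    rw [hEq]
    refine Submodule.sub_mem _ (hCmem i hi1 (by omega)) ?_
    refine Submodule.sum_mem _ fun w hw => ?_
    rw [Finset.mem_range] at hw
    have hwr : w * r + r ≤ q * r := by
      have h2 := Nat.mul_le_mul_right r (show w + 1 ≤ q from hw)
      rw [Nat.succ_mul] at h2
      exact h2
    have hKeq : b' + (lam + w * r) = (i + w * r) + K := by omega
    rw [show eSum K m (i + w * r) = eSum K m (b' + (lam + w * r)) from by
      rw [hKeq, eSum_add_K]]
    exact hFj _ (by omega) (by omega)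
lemma code_ncard (hK : 0 < K) (hD : 0 < D) (hlam : 0 < lam) (hm : 0 < m) (hDK : D < K)
    (hdvd1 : lam ∣ (K - D)) (hdvd2 : (K - D) ∣ (K - lam)) :
    (codeSet K D lam m).ncard = K - D := by
  haveI : NeZero (m * K) := ⟨by positivity⟩
  set r := K - D with hr
  set q := (K - lam) / (K - D) with hq
  have hrpos : 0 < r := by omega
  have hqr : q * r = K - lam := Nat.div_mul_cancel hdvd2
  have hlamr : lam ≤ r := Nat.le_of_dvd hrpos hdvd1
  have hq1 : 1 ≤ q := by
    rcases Nat.eq_zero_or_pos q with h | h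
    · exfalso; rw [h] at hqr; omega
    · exact h
  have hrqr : r ≤ q * r := by
    calc r = 1 * r := (one_mul r).symm
      _ ≤ q * r := Nat.mul_le_mul_right r hq1
  have hlamD : lam ≤ D := by omega
  set g : ℕ → (ZMod (m*K) → ZMod 2) := fun i =>
    (∑ w ∈ Finset.range q, eSum K m (i + w * r)) + eSum K m (q * r + 1 + ((i-1) % lam)) with hg
  have himg : codeSet K D lam m = g '' ↑(Finset.Icc 1 r) := by
    ext v
    simp only [codeSet, Set.mem_setOf_eq, Set.mem_image, Finset.coe_Icc, Set.mem_Icc]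
    constructor
    · rintro ⟨i, h1, h2, h3⟩; exact ⟨i, ⟨h1, h2⟩, h3.symm⟩
    · rintro ⟨i, ⟨h1, h2⟩, h3⟩; exact ⟨i, h1, h2, h3.symm⟩
  have heval : ∀ x i' : ℕ, 1 ≤ x → x ≤ r → 1 ≤ i' → i' ≤ r →
      g i' ((x : ZMod (m*K))) = if x = i' then 1 else 0 := by
    intro x i' hx1 hxr hi1 hir
    have hxK : x < K := by omega
    have hxmK : x < m * K := lt_of_lt_of_le hxK (Nat.le_mul_of_pos_left K hm)
    have hval : ((x : ℕ) : ZMod (m*K)).val = x := ZMod.val_cast_of_lt hxmK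
    have htail : eSum K m (q * r + 1 + ((i'-1) % lam)) ((x : ZMod (m*K))) = 0 := by
      rw [eSum_apply hK hm, hval, Nat.mod_eq_of_lt hxK]
      have hsl : (i'-1) % lam < lam := Nat.mod_lt _ hlam
      rcases lt_or_eq_of_le (show q * r + 1 + ((i'-1) % lam) ≤ K from by omega) with h | h
      · rw [Nat.mod_eq_of_lt h, if_neg (by omega)]
      · rw [h, Nat.mod_self, if_neg (by omega)]
    have hterm : ∀ w ∈ Finset.range q,
        eSum K m (i' + w * r) ((x : ZMod (m*K)))
          = if w = 0 then (if x = i' then (1 : ZMod 2) else 0) else 0 := by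
      intro w hw
      rw [Finset.mem_range] at hw
      have hwr : w * r + r ≤ q * r := by
        have h2 := Nat.mul_le_mul_right r (show w + 1 ≤ q from hw)
        rw [Nat.succ_mul] at h2
        exact h2
      rw [eSum_apply hK hm, hval, Nat.mod_eq_of_lt hxK,
        Nat.mod_eq_of_lt (show i' + w * r < K from by omega)]
      by_cases hw0 : w = 0
      · subst hw0
        rw [if_pos rfl]
        norm_num
      · have hw1 := Nat.mul_le_mul_right r (show 1 ≤ w from by omega)
        rw [one_mul] at hw1
        rw [if_neg hw0, if_neg (by omega)]
    simp only [hg, Pi.add_apply, Finset.sum_apply]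
    rw [Finset.sum_congr rfl hterm, Finset.sum_ite_eq' (Finset.range q) 0,
      if_pos (Finset.mem_range.mpr (by omega)), htail, add_zero]
  have hinj : Set.InjOn g ↑(Finset.Icc 1 r) := by
    intro a ha b hb hab
    rw [Finset.coe_Icc, Set.mem_Icc] at ha hb
    have h1 := congrFun hab ((a : ℕ) : ZMod (m*K))
    rw [heval a a ha.1 ha.2 ha.1 ha.2, heval a b ha.1 ha.2 hb.1 hb.2, if_pos rfl] at h1
    by_contra hne
    rw [if_neg hne] at h1
    exact one_ne_zero h1
  rw [himg, Set.ncard_image_of_injOn hinj, Set.ncard_coe_finset, Nat.card_Icc]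
  omega

lemma lower_bound (hK : 0 < K) (hD : 0 < D) (hm : 0 < m) (hDK : D < K)
    (C' : Set (ZMod (m * K) → ZMod 2))
    (hC' : IsIndexCode (m * K) (consecLiftedA K D m) C') : K - D ≤ C'.ncard := by
  haveI : NeZero (m * K) := ⟨by positivity⟩
  set r := K - D with hr
  have hrpos : 0 < r := by omega
  have hKmK : K ≤ m * K := Nat.le_mul_of_pos_left K hm
  set σ : ℕ → ZMod (m*K) := fun a => ((D + a : ℕ) : ZMod (m*K)) with hσ
  have hm1K : (m - 1) * K = m * K - K := Nat.sub_one_mul m K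
  have hchain : ∀ a b : ℕ, 1 ≤ a → a ≤ r → 1 ≤ b → b ≤ a →
      σ b ∉ consecLiftedA K D m (σ a) := by
    intro a b ha1 har hb1 hba hmem
    rcases hmem with ⟨i, hi1, him, heq⟩ | ⟨j, i, hj1, hjD, him, heq⟩
    · have hiK : i * K ≤ (m-1) * K := Nat.mul_le_mul_right K him
      have h1K : 1 * K ≤ i * K := Nat.mul_le_mul_right K hi1
      rw [one_mul] at h1K
      have heq2 : ((D + b : ℕ) : ZMod (m*K)) = ((D + a + i * K : ℕ) : ZMod (m*K)) := by
        simp only [hσ] at heq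
        rw [heq]; push_cast; ring
      have hdvd := (Nat.modEq_iff_dvd' (by omega)).mp
        ((ZMod.natCast_eq_natCast_iff _ _ _).mp heq2)
      have := Nat.le_of_dvd (by omega) hdvd
      omega
    · have hiK : i * K ≤ (m-1) * K := Nat.mul_le_mul_right K him
      have heq2 : ((D + b : ℕ) : ZMod (m*K)) = ((D + a + (j + i * K) : ℕ) : ZMod (m*K)) := by
        simp only [hσ] at heq
        rw [heq]; push_cast; ring
      have hdvd := (Nat.modEq_iff_dvd' (by omega)).mp
        ((ZMod.natCast_eq_natCast_iff _ _ _).mp heq2)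
      have := Nat.le_of_dvd (by omega) hdvd
      omega
  set B := stdVec (m*K) '' (Set.univ \ (σ '' Set.Icc 1 r)) with hB
  set W := Submodule.span (ZMod 2) (C' ∪ B) with hW
  have hmain : ∀ a : ℕ, 1 ≤ a → a ≤ r →
      (∀ b : ℕ, 1 ≤ b → b ≤ r → a < b → stdVec (m*K) (σ b) ∈ W) →
        stdVec (m*K) (σ a) ∈ W := by
    intro a h1 h2 hIH
    refine Submodule.span_le.mpr ?_ (hC'.2 (σ a))
    rintro x (hx | ⟨y, hy, rfl⟩)
    · exact Submodule.subset_span (Or.inl hx)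
    · by_cases hyT : y ∈ σ '' Set.Icc 1 r
      · obtain ⟨b, hb, rfl⟩ := hyT
        rw [Set.mem_Icc] at hb
        have hab : a < b := by
          by_contra hle
          push_neg at hle
          exact hchain a b h1 h2 hb.1 hle hy
        exact hIH b hb.1 hb.2 hab
      · exact Submodule.subset_span (Or.inr ⟨y, ⟨Set.mem_univ y, hyT⟩, rfl⟩)
  have hkey : ∀ t a : ℕ, 1 ≤ a → a ≤ r → r ≤ a + t → stdVec (m*K) (σ a) ∈ W := by
    intro t
    induction t with
    | zero =>
      intro a h1 h2 h3
      exact hmain a h1 h2 (fun b hb1 hb2 hab => absurd hb2 (by omega))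
    | succ t ih =>
      intro a h1 h2 h3
      exact hmain a h1 h2 (fun b hb1 hb2 hab => ih b hb1 hb2 (by omega))
  have hall : ∀ j : ZMod (m*K), stdVec (m*K) j ∈ W := by
    intro j
    by_cases hj : j ∈ σ '' Set.Icc 1 r
    · obtain ⟨b, hb, rfl⟩ := hj
      rw [Set.mem_Icc] at hb
      exact hkey r b hb.1 hb.2 (by omega)
    · exact Submodule.subset_span (Or.inr ⟨j, ⟨Set.mem_univ j, hj⟩, rfl⟩)
  have htop : ∀ v : ZMod (m*K) → ZMod 2, v ∈ W := by
    intro v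
    rw [stdVec_decomp v]
    exact Submodule.sum_mem _ fun j _ => Submodule.smul_mem _ _ (hall j)
  have hCfin := hC'.1
  have hBfin : B.Finite := Set.toFinite B
  have hUfin : (C' ∪ B).Finite := hCfin.union hBfin
  have hspan_top : Submodule.span (ZMod 2) (C' ∪ B) = ⊤ :=
    eq_top_iff.mpr (fun v _ => htop v)
  have hrank2 : Module.finrank (ZMod 2) (Submodule.span (ZMod 2) (C' ∪ B)) = m * K := by
    rw [hspan_top, finrank_top, Module.finrank_fintype_fun_eq_card, ZMod.card]
  have hrank3 := finrank_span_finset_le_card (R := ZMod 2) hUfin.toFinset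
  rw [Set.Finite.coe_toFinset] at hrank3
  have h5 : Module.finrank (ZMod 2) (Submodule.span (ZMod 2) (C' ∪ B)) ≤ hUfin.toFinset.card :=
    hrank3
  rw [hrank2, ← Set.ncard_eq_toFinset_card (C' ∪ B) hUfin] at h5
  have hσinj : Set.InjOn σ (Set.Icc 1 r) := by
    intro a ha b hb hab
    rw [Set.mem_Icc] at ha hb
    have hmod := (ZMod.natCast_eq_natCast_iff _ _ _).mp
      (show ((D + a : ℕ) : ZMod (m*K)) = ((D + b : ℕ) : ZMod (m*K)) from hab)
    by_contra hne
    rcases Nat.lt_or_ge a b with h | h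
    · have hdvd := (Nat.modEq_iff_dvd' (by omega)).mp hmod
      have := Nat.le_of_dvd (by omega) hdvd
      omega
    · have hdvd := (Nat.modEq_iff_dvd' (by omega)).mp hmod.symm
      have := Nat.le_of_dvd (by omega) hdvd
      omega
  have hσcard : (σ '' Set.Icc 1 r).ncard = r := by
    rw [Set.ncard_image_of_injOn hσinj,
      show (Set.Icc 1 r) = ↑(Finset.Icc 1 r) from (Finset.coe_Icc 1 r).symm,
      Set.ncard_coe_finset, Nat.card_Icc]
    omega
  have hBcard : B.ncard ≤ m * K - r := by
    calc B.ncard ≤ (Set.univ \ (σ '' Set.Icc 1 r)).ncard := Set.ncard_image_le (Set.toFinite _)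
      _ = (Set.univ : Set (ZMod (m*K))).ncard - (σ '' Set.Icc 1 r).ncard :=
          Set.ncard_diff (Set.subset_univ _)
      _ = m * K - r := by
          rw [Set.ncard_univ, Nat.card_eq_fintype_card, ZMod.card, hσcard]
  have hunion_le := Set.ncard_union_le C' B
  omega


lemma code_finite : (codeSet K D lam m).Finite := by
  apply Set.Finite.subset (Set.Finite.image
    (fun i : ℕ => (∑ w ∈ Finset.range ((K - lam) / (K - D)), eSum K m (i + w * (K - D))) +
      eSum K m (((K - lam) / (K - D)) * (K - D) + 1 + ((i - 1) % lam)))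
    (Set.finite_Icc 1 (K - D)))
  rintro v ⟨i, h1, h2, h3⟩
  exact ⟨i, Set.mem_Icc.mpr ⟨h1, h2⟩, h3.symm⟩

end LiftedVI

/-- **Corollary 2 (lift of Case VI).** If `λ ∣ K - D` and `K - D ∣ K - λ`, with
`r = K - D` and `q = (K - λ)/(K - D)`, the lifted code
`{Σ_{v=0}^{q-1} e'_{i+vr} + e'_{qr+1+((i-1) mod λ)} : 1 ≤ i ≤ r}` is a valid scalar
linear index code of optimal length `K - D` for the lifted consecutive-antidote
problem on `m*K` messages. -/
theorem lifted_code_caseVI (K D lam m : ℕ) (hK : 0 < K) (hD : 0 < D) (hlam : 0 < lam)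
    (hm : 0 < m) (hDK : D < K) (hdvd1 : lam ∣ (K - D)) (hdvd2 : (K - D) ∣ (K - lam)) :
    (IsIndexCode (m * K) (consecLiftedA K D m)
        {v | ∃ i : ℕ, 1 ≤ i ∧ i ≤ K - D ∧
          v = (∑ w ∈ Finset.range ((K - lam) / (K - D)), eSum K m (i + w * (K - D))) +
            eSum K m (((K - lam) / (K - D)) * (K - D) + 1 + ((i - 1) % lam))} ∧
      ({v | ∃ i : ℕ, 1 ≤ i ∧ i ≤ K - D ∧
          v = (∑ w ∈ Finset.range ((K - lam) / (K - D)), eSum K m (i + w * (K - D))) +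
            eSum K m (((K - lam) / (K - D)) * (K - D) + 1 + ((i - 1) % lam))} :
        Set (ZMod (m * K) → ZMod 2)).ncard = K - D) ∧
    (∀ C' : Set (ZMod (m * K) → ZMod 2),
      IsIndexCode (m * K) (consecLiftedA K D m) C' → K - D ≤ C'.ncard) := by
  refine ⟨⟨⟨LiftedVI.code_finite, fun k => LiftedVI.decode hK hD hlam hm hDK hdvd1 hdvd2 k⟩,
    LiftedVI.code_ncard hK hD hlam hm hDK hdvd1 hdvd2⟩,
    fun C' h => LiftedVI.lower_bound hK hD hm hDK C' h⟩
end

section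
/- Let K, D, m be positive integers with 0 < D < K and K − D dividing K (hence K − D divides D and divides (m−1)K + D). Then for every k ∈ ZMod (mK) the following set identity holds in ZMod (mK): {k + iK : 1 ≤ i ≤ m−1} ∪ {k + p(K−D) + iK : 1 ≤ p ≤ D/(K−D), 0 ≤ i ≤ m−1} = {k + j(K−D) : 1 ≤ j ≤ ((m−1)K + D)/(K−D)}. Consequently, the lift with parameter m of the index coding problem with K messages and antidotes A_k = {k + j(K−D) : 1 ≤ j ≤ D/(K−D)} is exactly the problem of the same class with parameters K' = mK and D' = (m−1)K + D, which again satisfy K' − D' dividing K'. -/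
/-- **Proposition 2 (Case II is closed under lifting).** If `K - D ∣ K` then the lifted
antidote pattern (with parameter `m`) of the problem with `K` messages and antidotes
`A_k = {k + j(K-D) : 1 ≤ j ≤ D/(K-D)}` coincides with the antidote pattern of the same
class with parameters `K' = mK` and `D' = (m-1)K + D`, and `K' - D'` divides `K'`. -/
theorem caseII_closed_under_lifting (K D m : ℕ) (hK : 0 < K) (hm : 0 < m) (hD : 0 < D)
    (hDK : D < K) (hdvd : (K - D) ∣ K) :
    (∀ k : ZMod (m * K),
      ({x | ∃ i : ℕ, 1 ≤ i ∧ i ≤ m - 1 ∧ x = k + (i * K : ℕ)} ∪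
        {x | ∃ p i : ℕ, 1 ≤ p ∧ p ≤ D / (K - D) ∧ i ≤ m - 1 ∧
          x = k + (p * (K - D) + i * K : ℕ)}) =
      {x | ∃ j : ℕ, 1 ≤ j ∧ j ≤ ((m - 1) * K + D) / (K - D) ∧
        x = k + (j * (K - D) : ℕ)}) ∧
    (m * K - ((m - 1) * K + D)) ∣ (m * K) := by
  set c := K - D with hc
  have hc0 : 0 < c := Nat.sub_pos_of_lt hDK
  obtain ⟨q, hq⟩ := hdvd
  have hq0 : 0 < q := by
    rcases Nat.eq_zero_or_pos q with h | h
    · exfalso; rw [h, Nat.mul_zero] at hq; omega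
    · exact h
  have hq1 : q - 1 + 1 = q := Nat.succ_pred_eq_of_pos hq0
  have hKq : K = c * (q - 1) + c := by rw [hq]; nth_rewrite 1 [← hq1]; ring
  have hDc : D = c * (q - 1) := by omega
  have hDdiv : D / c = q - 1 := by rw [hDc, Nat.mul_div_cancel_left _ hc0]
  have hm1 : m - 1 + 1 = m := Nat.succ_pred_eq_of_pos hm
  set N : ℕ := (m - 1) * q + (q - 1) with hN
  have hmKD : (m - 1) * K + D = c * N := by rw [hq, hDc, hN]; ring
  have hQdiv : ((m - 1) * K + D) / c = N := by rw [hmKD, Nat.mul_div_cancel_left _ hc0]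
  have hmq : m * q = (m - 1) * q + q := by nth_rewrite 1 [← hm1]; ring
  constructor
  · intro k
    ext x
    simp only [Set.mem_union, Set.mem_setOf_eq, hDdiv, hQdiv]
    constructor
    · rintro (⟨i, hi1, hi2, rfl⟩ | ⟨p, i, hp1, hp2, hi, rfl⟩)
      · refine ⟨i * q, ?_, ?_, ?_⟩
        · exact Nat.one_le_iff_ne_zero.mpr (by positivity)
        · have : i * q ≤ (m - 1) * q := Nat.mul_le_mul_right q hi2
          omega
        · congr 1
          push_cast
          rw [hq]; push_cast; ring
      · refine ⟨i * q + p, by omega, ?_, ?_⟩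
        · have : i * q ≤ (m - 1) * q := Nat.mul_le_mul_right q hi
          omega
        · congr 1
          push_cast
          rw [hq]; push_cast; ring
    · rintro ⟨j, hj1, hj2, rfl⟩
      have hdm : q * (j / q) + j % q = j := Nat.div_add_mod j q
      have hmod : j % q < q := Nat.mod_lt j hq0
      have hilt : j / q ≤ m - 1 := by
        by_contra h
        push_neg at h
        have : m ≤ j / q := by omega
        have h2 : q * m ≤ q * (j / q) := Nat.mul_le_mul_left q this
        have h3 : q * m = (m - 1) * q + q := by rw [mul_comm]; exact hmq
        omega
      rcases Nat.eq_zero_or_pos (j % q) with hp0 | hp0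
      · left
        refine ⟨j / q, ?_, hilt, ?_⟩
        · by_contra h
          push_neg at h
          interval_cases (j / q) <;> omega
        · have hval : j / q * K = j * c := by
            have hjq : j = q * (j / q) := by omega
            conv_rhs => rw [hjq]
            rw [hq]; ring
          congr 1
          rw [hval]
      · right
        refine ⟨j % q, j / q, hp0, by omega, hilt, ?_⟩
        · have hval : j % q * c + j / q * K = j * c := by
            have hjq : j = q * (j / q) + j % q := by omega
            conv_rhs => rw [hjq]
            rw [hq]; ring
          congr 1
          rw [hval]
  · have hmK : m * K = (m - 1) * K + K := by nth_rewrite 1 [← hm1]; ring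
    have h1 : m * K - ((m - 1) * K + D) = c := by omega
    rw [h1, hq]
    exact (dvd_mul_right c q).mul_left m
end

section
/- Let K, D, λ, m be positive integers with 0 < D < K, K − D + λ dividing K, and λ dividing K − D. For a pair (K̃, D̃) with K̃ − D̃ = K − D and K̃ − D̃ + λ dividing K̃, define S(K̃, D̃) := { aλ + (a−1)(K̃−D̃) : 1 ≤ a ≤ p̃ } ∪ { aλ + a(K̃−D̃) : 1 ≤ a ≤ p̃ − 1 } where p̃ = K̃/(K̃−D̃+λ). Then, with K' = mK and D' = (m−1)K + D, one has K' − D' + λ divides K', and for every k ∈ ZMod (mK) the set identity {k + iK : 1 ≤ i ≤ m−1} ∪ {k + s + iK : s ∈ S(K, D), 0 ≤ i ≤ m−1} = {k + s' : s' ∈ S(K', D')} holds in ZMod (mK). Consequently, the lift with parameter m of the index coding problem with K messages and antidotes A_k = {k + s : s ∈ S(K, D)} is exactly the problem of the same class with parameters K' and D'. -/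
/-- The antidote-offset set of the Case VIII class for parameters `(K̃, D̃)` (and fixed
`λ`): `S(K̃,D̃) = {aλ + (a-1)(K̃-D̃) : 1 ≤ a ≤ p̃} ∪ {aλ + a(K̃-D̃) : 1 ≤ a ≤ p̃-1}` where
`p̃ = K̃/(K̃-D̃+λ)`. -/
def offsetSet (lam Kt Dt : ℕ) : Set ℕ :=
  {s | ∃ a : ℕ, 1 ≤ a ∧ a ≤ Kt / (Kt - Dt + lam) ∧ s = a * lam + (a - 1) * (Kt - Dt)} ∪
  {s | ∃ a : ℕ, 1 ≤ a ∧ a ≤ Kt / (Kt - Dt + lam) - 1 ∧ s = a * lam + a * (Kt - Dt)}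

/-- **Proposition 3 (Case VIII is closed under lifting).** If `K - D + λ ∣ K` and
`λ ∣ K - D` then, with `K' = mK` and `D' = (m-1)K + D`, one has `K' - D' + λ ∣ K'`, and
the lifted antidote pattern of the problem with antidote offsets `S(K,D)` coincides with
the antidote pattern of the same class with parameters `K'` and `D'`. -/
theorem caseVIII_closed_under_lifting (K D lam m : ℕ) (hK : 0 < K) (hD : 0 < D)
    (hlam : 0 < lam) (hm : 0 < m) (hDK : D < K)
    (hdvd1 : (K - D + lam) ∣ K) (hdvd2 : lam ∣ (K - D)) :
    (m * K - ((m - 1) * K + D) + lam) ∣ (m * K) ∧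
    ∀ k : ZMod (m * K),
      ({x | ∃ i : ℕ, 1 ≤ i ∧ i ≤ m - 1 ∧ x = k + (i * K : ℕ)} ∪
        {x | ∃ s ∈ offsetSet lam K D, ∃ i : ℕ, i ≤ m - 1 ∧
          x = k + (s + i * K : ℕ)}) =
      {x | ∃ s' ∈ offsetSet lam (m * K) ((m - 1) * K + D), x = k + (s' : ZMod (m * K))} := by
  obtain ⟨g, hgd⟩ : ∃ g, K - D = g := ⟨_, rfl⟩
  have hgpos : 0 < g := by omega
  obtain ⟨p, hpK⟩ : ∃ p, K / (g + lam) = p := ⟨_, rfl⟩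
  have htpos : 0 < g + lam := by omega
  have hKmul : p * (g + lam) = K := by
    rw [← hpK]; exact Nat.div_mul_cancel (hgd ▸ hdvd1)
  have hp : 1 ≤ p := by
    rcases Nat.eq_zero_or_pos p with h | h
    · rw [h] at hKmul; omega
    · exact h
  have hsub : m * K - ((m - 1) * K + D) = g := by
    have h1 : (m - 1) * K = m * K - K := Nat.sub_one_mul m K
    have h2 : K ≤ m * K := Nat.le_mul_of_pos_left K hm
    omega
  have hmp : m * K / (g + lam) = m * p :=
    Nat.div_eq_of_eq_mul_left htpos (by rw [mul_assoc, hKmul])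
  constructor
  · rw [hsub, ← hgd]; exact hdvd1.trans (dvd_mul_left K m)
  intro k
  ext x
  simp only [offsetSet, Set.mem_union, Set.mem_setOf_eq, hsub, hgd, hpK, hmp]
  constructor
  · rintro (⟨i, hi1, hi2, rfl⟩ | ⟨s, hs, i, hi, rfl⟩)
    · -- iK goes to type-2 with a = i*p
      have hb1 : 1 ≤ i * p := Nat.one_le_iff_ne_zero.mpr (by positivity)
      have h3 : i * p ≤ (m - 1) * p := Nat.mul_le_mul_right p hi2
      have h4 : (m - 1) * p = m * p - p := Nat.sub_one_mul m p
      have h5 : p ≤ m * p := Nat.le_mul_of_pos_left p hm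
      refine ⟨i * p * lam + (i * p) * g, Or.inr ⟨i * p, hb1, by omega, rfl⟩, ?_⟩
      have : i * K = i * p * lam + i * p * g := by rw [← hKmul]; ring
      rw [this]
    · have h4 : (m - 1) * p = m * p - p := Nat.sub_one_mul m p
      have h5 : p ≤ m * p := Nat.le_mul_of_pos_left p hm
      have h3 : i * p ≤ (m - 1) * p := Nat.mul_le_mul_right p hi
      rcases hs with ⟨a, ha1, hap, rfl⟩ | ⟨a, ha1, hap, rfl⟩
      · obtain ⟨c, rfl⟩ : ∃ c, a = c + 1 := ⟨a - 1, by omega⟩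
        refine ⟨(i * p + c + 1) * lam + (i * p + c) * g,
          Or.inl ⟨i * p + c + 1, by omega, by omega, by simp⟩, ?_⟩
        have : (c + 1) * lam + (c + 1 - 1) * g + i * K
            = (i * p + c + 1) * lam + (i * p + c) * g := by
          rw [← hKmul]; simp; ring
        rw [this]
      · refine ⟨(i * p + a) * lam + (i * p + a) * g,
          Or.inr ⟨i * p + a, by omega, by omega, rfl⟩, ?_⟩
        have : a * lam + a * g + i * K = (i * p + a) * lam + (i * p + a) * g := by
          rw [← hKmul]; ring
        rw [this]
  · rintro ⟨s', (⟨a, ha1, hap, rfl⟩ | ⟨a, ha1, hap, rfl⟩), rfl⟩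
    · obtain ⟨c, rfl⟩ : ∃ c, a = c + 1 := ⟨a - 1, by omega⟩
      obtain ⟨i, r, hc, hrp, him⟩ : ∃ i r, c = p * i + r ∧ r < p ∧ i < m := by
        refine ⟨c / p, c % p, ?_, Nat.mod_lt _ (by omega), ?_⟩
        · have := Nat.div_add_mod c p; omega
        · rw [Nat.div_lt_iff_lt_mul (by omega)]; omega
      subst hc
      refine Or.inr ⟨(r + 1) * lam + r * g, Or.inl ⟨r + 1, by omega, by omega, by simp⟩,
        i, by omega, ?_⟩
      have : (r + 1) * lam + r * g + i * K
          = (p * i + r + 1) * lam + (p * i + r + 1 - 1) * g := by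
        rw [← hKmul]; simp; ring
      rw [this]
    · obtain ⟨i, r, hc, hrp, him⟩ : ∃ i r, a = p * i + r ∧ r < p ∧ i < m := by
        refine ⟨a / p, a % p, ?_, Nat.mod_lt _ (by omega), ?_⟩
        · have := Nat.div_add_mod a p; omega
        · rw [Nat.div_lt_iff_lt_mul (by omega)]
          have h4 : (m - 1) * p = m * p - p := Nat.sub_one_mul m p
          have h5 : p ≤ m * p := Nat.le_mul_of_pos_left p hm
          omega
      subst hc
      rcases Nat.eq_zero_or_pos r with hr0 | hr1
      · subst hr0
        have hi1 : 1 ≤ i := by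
          rcases Nat.eq_zero_or_pos i with h | h
          · subst h; simp at ha1
          · exact h
        refine Or.inl ⟨i, hi1, by omega, ?_⟩
        have : (p * i + 0) * lam + (p * i + 0) * g = i * K := by
          rw [← hKmul]; ring
        rw [this]
      · refine Or.inr ⟨r * lam + r * g, Or.inr ⟨r, hr1, by omega, rfl⟩, i, by omega, ?_⟩
        have : r * lam + r * g + i * K = (p * i + r) * lam + (p * i + r) * g := by
          rw [← hKmul]; ring
        rw [this]
end
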